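/- arXiv:1402.5190 — 4 statements merged into one kernel-verified Lean document; each statement's English description precedes it below -/
import Mathlib

section
/- Assume the subset LCM assumption (E(x_j | X_F) = E(x_j X_Fᵀ)Σ_F^{-1}X_F a.s.) and the subset CCV assumption (var(x_j | X_F) is a.s. constant). If Y ⟂ x_j | X_F for some F ⊂ I and j ∈ F^c, then for every h = 1,…,H, E(x_{j|F}² | Y∈J_h) = var(x_{j|F}); equivalently ζ_{j|F,h} = 1. -/
open MeasureTheory ProbabilityTheory Matrix Filter Finset
open scoped BigOperators ENNReal

noncomputable section

namespace TracePursuit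

variable {Ω : Type*}

/-- Second-moment (= covariance, under mean zero) matrix of the coordinates of `X` in `F`. -/
def covM [MeasurableSpace Ω] (μ : Measure Ω) {p : ℕ} (X : Ω → Fin p → ℝ)
    (F : Finset (Fin p)) : Matrix F F ℝ :=
  Matrix.of fun i j => ∫ ω, X ω i.1 * X ω j.1 ∂μ

/-- Slice probability `p_h = P(Y ∈ J_h)`. -/
def sliceP [MeasurableSpace Ω] (μ : Measure Ω) {H : ℕ} (Y : Ω → ℝ)
    (J : Fin H → Set ℝ) (h : Fin H) : ℝ :=
  (μ (Y ⁻¹' J h)).toReal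

/-- Slice mean vector `U_{F,h} = E(X_F | Y ∈ J_h)`. -/
def sliceU [MeasurableSpace Ω] (μ : Measure Ω) {p H : ℕ} (X : Ω → Fin p → ℝ)
    (Y : Ω → ℝ) (J : Fin H → Set ℝ) (F : Finset (Fin p)) (h : Fin H) : F → ℝ :=
  fun i => (∫ ω in Y ⁻¹' J h, X ω i.1 ∂μ) / sliceP μ Y J h

/-- Slice second-moment matrix `V_{F,h} = E(X_F X_Fᵀ | Y ∈ J_h)`. -/
def sliceV [MeasurableSpace Ω] (μ : Measure Ω) {p H : ℕ} (X : Ω → Fin p → ℝ)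
    (Y : Ω → ℝ) (J : Fin H → Set ℝ) (F : Finset (Fin p)) (h : Fin H) : Matrix F F ℝ :=
  Matrix.of fun i j => (∫ ω in Y ⁻¹' J h, X ω i.1 * X ω j.1 ∂μ) / sliceP μ Y J h

/-- The SIR kernel matrix `M^SIR_F = Σ_F^{-1/2} (Σ_h p_h U_{F,h} U_{F,h}ᵀ) Σ_F^{-1/2}`,
where `S` is the inverse square root `Σ_F^{-1/2}`. -/
def MSIR [MeasurableSpace Ω] (μ : Measure Ω) {p H : ℕ} (X : Ω → Fin p → ℝ)
    (Y : Ω → ℝ) (J : Fin H → Set ℝ) (F : Finset (Fin p)) (S : Matrix F F ℝ) :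
    Matrix F F ℝ :=
  S * (∑ h, sliceP μ Y J h • vecMulVec (sliceU μ X Y J F h) (sliceU μ X Y J F h)) * S

/-- The SAVE kernel matrix
`M^SAVE_F = Σ_h p_h (Σ_F^{-1/2}(Σ_F - V_{F,h} + U_{F,h}U_{F,h}ᵀ)Σ_F^{-1/2})²`. -/
def MSAVE [MeasurableSpace Ω] (μ : Measure Ω) {p H : ℕ} (X : Ω → Fin p → ℝ)
    (Y : Ω → ℝ) (J : Fin H → Set ℝ) (F : Finset (Fin p)) (S : Matrix F F ℝ) :
    Matrix F F ℝ :=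
  ∑ h, sliceP μ Y J h •
    (S * (covM μ X F - sliceV μ X Y J F h
        + vecMulVec (sliceU μ X Y J F h) (sliceU μ X Y J F h)) * S) ^ 2

/-- `κ_F = Σ_h p_h U_{F,h}ᵀ Σ_F⁻¹ U_{F,h}`. -/
def kappaF [MeasurableSpace Ω] (μ : Measure Ω) {p H : ℕ} (X : Ω → Fin p → ℝ)
    (Y : Ω → ℝ) (J : Fin H → Set ℝ) (F : Finset (Fin p)) : ℝ :=
  ∑ h, sliceP μ Y J h *
    (sliceU μ X Y J F h ⬝ᵥ (covM μ X F)⁻¹.mulVec (sliceU μ X Y J F h))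

/-- The directional-regression kernel matrix `M^DR_F`. -/
def MDR [MeasurableSpace Ω] (μ : Measure Ω) {p H : ℕ} (X : Ω → Fin p → ℝ)
    (Y : Ω → ℝ) (J : Fin H → Set ℝ) (F : Finset (Fin p)) (S : Matrix F F ℝ) :
    Matrix F F ℝ :=
  (2 : ℝ) • (∑ h, sliceP μ Y J h • (S * sliceV μ X Y J F h * S) ^ 2)
  + (2 : ℝ) • (∑ h, sliceP μ Y J h •
      (S * vecMulVec (sliceU μ X Y J F h) (sliceU μ X Y J F h) * S)) ^ 2
  + (2 : ℝ) • (kappaF μ X Y J F •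
      (∑ h, sliceP μ Y J h •
        (S * vecMulVec (sliceU μ X Y J F h) (sliceU μ X Y J F h) * S)))
  - (2 : ℝ) • (1 : Matrix F F ℝ)

/-- The σ-algebra generated by `X_F`. -/
def mF [MeasurableSpace Ω] {p : ℕ} (X : Ω → Fin p → ℝ) (F : Finset (Fin p)) :
    MeasurableSpace Ω :=
  MeasurableSpace.comap (fun ω => fun i : F => X ω i.1) inferInstance

/-- `θ_{j|F} = Σ_F⁻¹ E(x_j X_F)`. -/
def thetaJF [MeasurableSpace Ω] (μ : Measure Ω) {p : ℕ} (X : Ω → Fin p → ℝ)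
    (F : Finset (Fin p)) (j : Fin p) : F → ℝ :=
  (covM μ X F)⁻¹.mulVec fun i => ∫ ω, X ω j * X ω i.1 ∂μ

/-- The subset linear conditional mean assumption:
for every `F ⊂ I` and `j ∈ Fᶜ`, `E(x_j | X_F) = E(x_j X_Fᵀ) Σ_F⁻¹ X_F` a.s. -/
def SubsetLCM [MeasurableSpace Ω] (μ : Measure Ω) {p : ℕ} (X : Ω → Fin p → ℝ) : Prop :=
  ∀ (F : Finset (Fin p)) (j : Fin p), j ∉ F →
    (μ[fun ω => X ω j | mF X F]) =ᵐ[μ] fun ω => ∑ i : F, thetaJF μ X F j i * X ω i.1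

/-- The subset constant conditional variance assumption:
for every `F ⊂ I` and `j ∈ Fᶜ`, `var(x_j | X_F)` is a.s. constant. -/
def SubsetCCV [MeasurableSpace Ω] (μ : Measure Ω) {p : ℕ} (X : Ω → Fin p → ℝ) : Prop :=
  ∀ (F : Finset (Fin p)) (j : Fin p), j ∉ F → ∃ c : ℝ,
    (fun ω => (μ[fun ω' => X ω' j ^ 2 | mF X F]) ω - ((μ[fun ω' => X ω' j | mF X F]) ω) ^ 2)
      =ᵐ[μ] fun _ => c

/-- The residual `x_{j|F} = x_j - E(x_j | X_F)`. -/
def xres [MeasurableSpace Ω] (μ : Measure Ω) {p : ℕ} (X : Ω → Fin p → ℝ)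
    (F : Finset (Fin p)) (j : Fin p) : Ω → ℝ :=
  fun ω => X ω j - (μ[fun ω' => X ω' j | mF X F]) ω

/-- Variance of a real function. -/
def varF [MeasurableSpace Ω] (μ : Measure Ω) (f : Ω → ℝ) : ℝ :=
  ∫ ω, f ω ^ 2 ∂μ - (∫ ω, f ω ∂μ) ^ 2

/-- `σ²_{j|F} = var(x_{j|F})`. -/
def sigma2 [MeasurableSpace Ω] (μ : Measure Ω) {p : ℕ} (X : Ω → Fin p → ℝ)
    (F : Finset (Fin p)) (j : Fin p) : ℝ :=
  varF μ (xres μ X F j)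

/-- `γ_{j|F} = x_{j|F}/σ_{j|F}`. -/
def gammaRes [MeasurableSpace Ω] (μ : Measure Ω) {p : ℕ} (X : Ω → Fin p → ℝ)
    (F : Finset (Fin p)) (j : Fin p) : Ω → ℝ :=
  fun ω => xres μ X F j ω / Real.sqrt (sigma2 μ X F j)

/-- `γ_{j|F,h} = E(γ_{j|F} | Y ∈ J_h)`. -/
def gammaH [MeasurableSpace Ω] (μ : Measure Ω) {p H : ℕ} (X : Ω → Fin p → ℝ)
    (Y : Ω → ℝ) (J : Fin H → Set ℝ) (F : Finset (Fin p)) (j : Fin p) (h : Fin H) : ℝ :=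
  (∫ ω in Y ⁻¹' J h, gammaRes μ X F j ω ∂μ) / sliceP μ Y J h

/-- `ζ_{j|F,h} = E(γ_{j|F}² | Y ∈ J_h)`. -/
def zetaH [MeasurableSpace Ω] (μ : Measure Ω) {p H : ℕ} (X : Ω → Fin p → ℝ)
    (Y : Ω → ℝ) (J : Fin H → Set ℝ) (F : Finset (Fin p)) (j : Fin p) (h : Fin H) : ℝ :=
  (∫ ω in Y ⁻¹' J h, gammaRes μ X F j ω ^ 2 ∂μ) / sliceP μ Y J h

/-- `E(X_F γ_{j|F} | Y ∈ J_h)`. -/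
def sliceXGamma [MeasurableSpace Ω] (μ : Measure Ω) {p H : ℕ} (X : Ω → Fin p → ℝ)
    (Y : Ω → ℝ) (J : Fin H → Set ℝ) (F : Finset (Fin p)) (j : Fin p) (h : Fin H) : F → ℝ :=
  fun i => (∫ ω in Y ⁻¹' J h, X ω i.1 * gammaRes μ X F j ω ∂μ) / sliceP μ Y J h

/-- `φ_{j|F,h} = Σ_F^{-1/2} (U_{F,h} γ_{j|F,h} - E(X_F γ_{j|F} | Y ∈ J_h))`. -/
def phiH [MeasurableSpace Ω] (μ : Measure Ω) {p H : ℕ} (X : Ω → Fin p → ℝ)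
    (Y : Ω → ℝ) (J : Fin H → Set ℝ) (F : Finset (Fin p)) (S : Matrix F F ℝ)
    (j : Fin p) (h : Fin H) : F → ℝ :=
  S.mulVec fun i => sliceU μ X Y J F h i * gammaH μ X Y J F j h
    - sliceXGamma μ X Y J F j h i

/-- `ν_{j|F,h} = Σ_F^{-1/2} E(X_F γ_{j|F} | Y ∈ J_h)`. -/
def nuH [MeasurableSpace Ω] (μ : Measure Ω) {p H : ℕ} (X : Ω → Fin p → ℝ)
    (Y : Ω → ℝ) (J : Fin H → Set ℝ) (F : Finset (Fin p)) (S : Matrix F F ℝ)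
    (j : Fin p) (h : Fin H) : F → ℝ :=
  S.mulVec (sliceXGamma μ X Y J F j h)

/-- `ι_{j|F,h} = Σ_F^{-1/2} U_{F,h} γ_{j|F,h}`. -/
def iotaH [MeasurableSpace Ω] (μ : Measure Ω) {p H : ℕ} (X : Ω → Fin p → ℝ)
    (Y : Ω → ℝ) (J : Fin H → Set ℝ) (F : Finset (Fin p)) (S : Matrix F F ℝ)
    (j : Fin p) (h : Fin H) : F → ℝ :=
  gammaH μ X Y J F j h • S.mulVec (sliceU μ X Y J F h)

/-- `ι_{j|F} = Σ_h p_h ι_{j|F,h}`. -/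
def iotaSum [MeasurableSpace Ω] (μ : Measure Ω) {p H : ℕ} (X : Ω → Fin p → ℝ)
    (Y : Ω → ℝ) (J : Fin H → Set ℝ) (F : Finset (Fin p)) (S : Matrix F F ℝ)
    (j : Fin p) : F → ℝ :=
  ∑ h, sliceP μ Y J h • iotaH μ X Y J F S j h

/-- `ϱ_{j|F} = Σ_h p_h γ_{j|F,h}²`. -/
def rhoJF [MeasurableSpace Ω] (μ : Measure Ω) {p H : ℕ} (X : Ω → Fin p → ℝ)
    (Y : Ω → ℝ) (J : Fin H → Set ℝ) (F : Finset (Fin p)) (j : Fin p) : ℝ :=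
  ∑ h, sliceP μ Y J h * gammaH μ X Y J F j h ^ 2

/-- `{J_h}` is a measurable partition of the sample space of `Y`. -/
def IsSlicePartition {H : ℕ} (J : Fin H → Set ℝ) : Prop :=
  (∀ h, MeasurableSet (J h)) ∧ Pairwise (Function.onFun Disjoint J) ∧ (⋃ h, J h) = Set.univ

/-- `S` is a symmetric inverse square root of `Sig`, i.e. `S = Σ'^{-1/2}`. -/
def IsInvSqrt {n : Type*} [Fintype n] [DecidableEq n] (S Sig : Matrix n n ℝ) : Prop :=
  S.IsSymm ∧ S * S = Sig⁻¹

end TracePursuit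


section Aux

open MeasureTheory ProbabilityTheory

variable {Ω : Type*}

/-- Product of two `L²` functions is integrable. -/
lemma integrable_mul_of_memL2 [MeasurableSpace Ω] {μ : Measure Ω} {f g : Ω → ℝ}
    (hf : MemLp f 2 μ) (hg : MemLp g 2 μ) :
    Integrable (fun ω => f ω * g ω) μ := by
  have h1 : Integrable (fun ω => (f ω + g ω) ^ 2) μ := by
    have := (hf.add hg).integrable_sq
    simpa [Pi.add_apply] using this
  have h2 := hf.integrable_sq
  have h3 := hg.integrable_sq
  have heq : (fun ω => f ω * g ω)
      = fun ω => (((f ω + g ω) ^ 2 - f ω ^ 2) - g ω ^ 2) / 2 := by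
    funext ω; ring
  rw [heq]
  exact ((h1.sub h2).sub h3).div_const 2

/-- If `Y` and `f` are conditionally independent given `mA`, and `φ` is a
`mA ⊔ σ(f)`-measurable integrable function whose conditional expectation given `mA` is
a.e. the constant `c`, then `∫_{Y ∈ s} φ = c · μ(Y ∈ s)`. -/
lemma slice_integral_eq (mA m2 : MeasurableSpace Ω)
    [m0 : MeasurableSpace Ω] [StandardBorelSpace Ω]
    (μ : Measure Ω) [IsProbabilityMeasure μ] (hA : mA ≤ m0)
    {f : Ω → ℝ} (hf : Measurable f) {Y : Ω → ℝ} (hY : Measurable Y)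
    (hnull : CondIndepFun mA hA Y f μ)
    (hm2eq : m2 = mA ⊔ MeasurableSpace.comap f inferInstance)
    {s : Set ℝ} (hs : MeasurableSet s)
    {φ : Ω → ℝ} (hφm : StronglyMeasurable[m2] φ) (hφi : Integrable φ μ)
    {c : ℝ} (hCE : (μ[φ | mA]) =ᵐ[μ] fun _ => c) :
    ∫ ω in Y ⁻¹' s, φ ω ∂μ = c * (μ (Y ⁻¹' s)).toReal := by
  have hm2 : m2 ≤ m0 := by
    rw [hm2eq]; exact sup_le hA (measurable_iff_comap_le.mp hf)
  have hAm2 : mA ≤ m2 := by rw [hm2eq]; exact le_sup_left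
  -- the π-system generating m2
  have hgen : m2 = MeasurableSpace.generateFrom
      {u | ∃ a, MeasurableSet[mA] a ∧ ∃ b : Set ℝ, MeasurableSet b ∧
        u = a ∩ f ⁻¹' b} := by
    rw [hm2eq]
    refine le_antisymm (sup_le ?_ ?_) (MeasurableSpace.generateFrom_le ?_)
    · intro t ht
      exact MeasurableSpace.measurableSet_generateFrom
        ⟨t, ht, Set.univ, MeasurableSet.univ, by simp⟩
    · intro t ht
      obtain ⟨b, hb, rfl⟩ := ht
      refine MeasurableSpace.measurableSet_generateFrom
        ⟨Set.univ, ?_, b, hb, by simp⟩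
      exact MeasurableSet.univ
    · rintro u ⟨a, ha, b, hb, rfl⟩
      exact MeasurableSet.inter ((le_sup_left : mA ≤ _) a ha)
        ((le_sup_right : MeasurableSpace.comap f inferInstance ≤ _) _ ⟨b, hb, rfl⟩)
  have hπpi : IsPiSystem {u | ∃ a, MeasurableSet[mA] a ∧ ∃ b : Set ℝ, MeasurableSet b ∧
      u = a ∩ f ⁻¹' b} := by
    rintro u1 ⟨a1, ha1, b1, hb1, rfl⟩ u2 ⟨a2, ha2, b2, hb2, rfl⟩ -
    refine ⟨a1 ∩ a2, ha1.inter ha2, b1 ∩ b2, hb1.inter hb2, ?_⟩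
    ext ω
    simp only [Set.mem_inter_iff, Set.mem_preimage]
    tauto
  have hSh : MeasurableSet (Y ⁻¹' s) := hY hs
  have hI1i : Integrable ((Y ⁻¹' s).indicator fun _ => (1 : ℝ)) μ :=
    (integrable_const (1 : ℝ)).indicator hSh
  have hgi : Integrable (μ[(Y ⁻¹' s).indicator fun _ => (1 : ℝ) | mA]) μ := integrable_condExp
  have hg01 : ∀ᵐ ω ∂μ, ‖(μ[(Y ⁻¹' s).indicator fun _ => (1 : ℝ) | mA]) ω‖ ≤ 1 := by
    have h0 : 0 ≤ᵐ[μ] μ[(Y ⁻¹' s).indicator fun _ => (1 : ℝ) | mA] := condExp_nonneg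
      (ae_of_all _ fun ω => Set.indicator_nonneg (fun _ _ => zero_le_one) ω)
    have h1 : (μ[(Y ⁻¹' s).indicator fun _ => (1 : ℝ) | mA])
        ≤ᵐ[μ] μ[(fun _ => (1 : ℝ)) | mA] := condExp_mono hI1i (integrable_const 1)
      (ae_of_all _ fun ω => by
        by_cases hω : ω ∈ Y ⁻¹' s <;> simp [Set.indicator_apply, hω])
    have h1' : (μ[(fun _ => (1 : ℝ)) | mA]) = fun _ => (1 : ℝ) := condExp_const hA 1
    filter_upwards [h0, h1] with ω hω0 hω1
    simp only [Pi.zero_apply] at hω0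
    rw [Real.norm_eq_abs, abs_le]
    rw [h1'] at hω1
    exact ⟨by linarith, hω1⟩
  have hfac0 := (condIndepFun_iff_condExp_inter_preimage_eq_mul
    (m' := mA) (hm' := hA) (μ := μ) hY hf).mp hnull
  -- the key set-integral identity on all of m2
  have key : ∀ u, MeasurableSet[m2] u →
      ∫ x in u, (μ[(Y ⁻¹' s).indicator fun _ => (1 : ℝ) | mA]) x ∂μ
        = ∫ x in u, (Y ⁻¹' s).indicator (fun _ => (1 : ℝ)) x ∂μ := by
    have hemp : ∫ x in (∅ : Set Ω), (μ[(Y ⁻¹' s).indicator fun _ => (1 : ℝ) | mA]) x ∂μ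
        = ∫ x in (∅ : Set Ω), (Y ⁻¹' s).indicator (fun _ => (1 : ℝ)) x ∂μ := by simp
    have hbasic : ∀ u ∈ {u | ∃ a, MeasurableSet[mA] a ∧ ∃ b : Set ℝ, MeasurableSet b ∧
        u = a ∩ f ⁻¹' b},
        ∫ x in u, (μ[(Y ⁻¹' s).indicator fun _ => (1 : ℝ) | mA]) x ∂μ
          = ∫ x in u, (Y ⁻¹' s).indicator (fun _ => (1 : ℝ)) x ∂μ := by
      rintro u ⟨a, ha, b, hb, rfl⟩
      have ham0 : MeasurableSet a := hA a ha
      have hB : MeasurableSet (f ⁻¹' b) := hf hb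
      have hIbi : Integrable ((f ⁻¹' b).indicator fun _ => (1 : ℝ)) μ :=
        (integrable_const (1 : ℝ)).indicator hB
      have hfac := hfac0 s b hs hb
      have hgIb : Integrable ((μ[(Y ⁻¹' s).indicator fun _ => (1 : ℝ) | mA])
          * (f ⁻¹' b).indicator fun _ => (1 : ℝ)) μ := by
        have := hIbi.bdd_mul (c := 1) hgi.aestronglyMeasurable hg01
        exact this.congr (ae_of_all _ fun ω => rfl)
      have hpull : (μ[(μ[(Y ⁻¹' s).indicator fun _ => (1 : ℝ) | mA])
            * ((f ⁻¹' b).indicator fun _ => (1 : ℝ)) | mA])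
          =ᵐ[μ] (μ[(Y ⁻¹' s).indicator fun _ => (1 : ℝ) | mA])
            * μ[(f ⁻¹' b).indicator fun _ => (1 : ℝ) | mA] :=
        condExp_mul_of_stronglyMeasurable_left stronglyMeasurable_condExp hgIb hIbi
      have hL1 : ∫ x in a ∩ f ⁻¹' b, (μ[(Y ⁻¹' s).indicator fun _ => (1 : ℝ) | mA]) x ∂μ
          = ∫ x in a, ((μ[(Y ⁻¹' s).indicator fun _ => (1 : ℝ) | mA])
              * μ[(f ⁻¹' b).indicator fun _ => (1 : ℝ) | mA]) x ∂μ := by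
        have e1 : ∫ x in a, (f ⁻¹' b).indicator
              (μ[(Y ⁻¹' s).indicator fun _ => (1 : ℝ) | mA]) x ∂μ
            = ∫ x in a ∩ f ⁻¹' b, (μ[(Y ⁻¹' s).indicator fun _ => (1 : ℝ) | mA]) x ∂μ := by
          rw [setIntegral_indicator hB]
        have e2 : (f ⁻¹' b).indicator (μ[(Y ⁻¹' s).indicator fun _ => (1 : ℝ) | mA])
            = (μ[(Y ⁻¹' s).indicator fun _ => (1 : ℝ) | mA])
              * (f ⁻¹' b).indicator fun _ => (1 : ℝ) := by
          funext ω
          by_cases hω : ω ∈ f ⁻¹' b <;> simp [Set.indicator_apply, hω]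
        rw [← e1, e2, ← setIntegral_condExp hA hgIb ha]
        exact setIntegral_congr_ae ham0 (by filter_upwards [hpull] with ω hω _ using hω)
      have e3 : (f ⁻¹' b).indicator ((Y ⁻¹' s).indicator fun _ => (1 : ℝ))
          = (Y ⁻¹' s ∩ f ⁻¹' b).indicator fun _ => (1 : ℝ) := by
        funext ω
        by_cases h1 : ω ∈ f ⁻¹' b <;> by_cases h2 : ω ∈ Y ⁻¹' s <;>
          simp [Set.indicator_apply, h1, h2]
      have hSBi : Integrable ((Y ⁻¹' s ∩ f ⁻¹' b).indicator fun _ => (1 : ℝ)) μ :=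
        (integrable_const (1 : ℝ)).indicator (hSh.inter hB)
      have hR1 : ∫ x in a ∩ f ⁻¹' b, (Y ⁻¹' s).indicator (fun _ => (1 : ℝ)) x ∂μ
          = ∫ x in a, ((μ[(Y ⁻¹' s).indicator fun _ => (1 : ℝ) | mA])
              * μ[(f ⁻¹' b).indicator fun _ => (1 : ℝ) | mA]) x ∂μ := by
        have e1 : ∫ x in a, (f ⁻¹' b).indicator
              ((Y ⁻¹' s).indicator fun _ => (1 : ℝ)) x ∂μ
            = ∫ x in a ∩ f ⁻¹' b, (Y ⁻¹' s).indicator (fun _ => (1 : ℝ)) x ∂μ := by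
          rw [setIntegral_indicator hB]
        rw [← e1, e3, ← setIntegral_condExp hA hSBi ha]
        refine setIntegral_congr_ae ham0 ?_
        filter_upwards [hfac] with ω hω _
        exact hω
      rw [hL1, hR1]
    have hcompl : ∀ u, MeasurableSet[m2] u →
        (∫ x in u, (μ[(Y ⁻¹' s).indicator fun _ => (1 : ℝ) | mA]) x ∂μ
          = ∫ x in u, (Y ⁻¹' s).indicator (fun _ => (1 : ℝ)) x ∂μ) →
        ∫ x in uᶜ, (μ[(Y ⁻¹' s).indicator fun _ => (1 : ℝ) | mA]) x ∂μ
          = ∫ x in uᶜ, (Y ⁻¹' s).indicator (fun _ => (1 : ℝ)) x ∂μ := by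
      intro u hu hC
      have hu0 : MeasurableSet u := hm2 u hu
      have e1 := integral_add_compl hu0 hgi
      have e2 := integral_add_compl hu0 hI1i
      have e3 : ∫ x, (μ[(Y ⁻¹' s).indicator fun _ => (1 : ℝ) | mA]) x ∂μ
          = ∫ x, (Y ⁻¹' s).indicator (fun _ => (1 : ℝ)) x ∂μ := integral_condExp hA
      linarith
    have hunion : ∀ t : ℕ → Set Ω, Pairwise (Function.onFun Disjoint t) →
        (∀ i, MeasurableSet[m2] (t i)) →
        (∀ i, ∫ x in t i, (μ[(Y ⁻¹' s).indicator fun _ => (1 : ℝ) | mA]) x ∂μ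
          = ∫ x in t i, (Y ⁻¹' s).indicator (fun _ => (1 : ℝ)) x ∂μ) →
        ∫ x in ⋃ i, t i, (μ[(Y ⁻¹' s).indicator fun _ => (1 : ℝ) | mA]) x ∂μ
          = ∫ x in ⋃ i, t i, (Y ⁻¹' s).indicator (fun _ => (1 : ℝ)) x ∂μ := by
      intro t hd htm hC
      have htm0 : ∀ i, MeasurableSet (t i) := fun i => hm2 _ (htm i)
      rw [integral_iUnion htm0 hd hgi.integrableOn,
        integral_iUnion htm0 hd hI1i.integrableOn]
      exact tsum_congr hC
    intro u hu
    exact MeasurableSpace.induction_on_inter (m := m2)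
      (C := fun u _ => ∫ x in u, (μ[(Y ⁻¹' s).indicator fun _ => (1 : ℝ) | mA]) x ∂μ
        = ∫ x in u, (Y ⁻¹' s).indicator (fun _ => (1 : ℝ)) x ∂μ)
      hgen hπpi hemp hbasic hcompl hunion u hu
  -- Markov property
  haveI : SigmaFinite (μ.trim hm2) := by infer_instance
  have hmry : (μ[(Y ⁻¹' s).indicator fun _ => (1 : ℝ) | m2])
      =ᵐ[μ] μ[(Y ⁻¹' s).indicator fun _ => (1 : ℝ) | mA] := by
    refine (ae_eq_condExp_of_forall_setIntegral_eq hm2 hI1i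
      (fun u _ _ => hgi.integrableOn) (fun u hu _ => key u hu) ?_).symm
    exact ((stronglyMeasurable_condExp (m := mA)).mono hAm2).aestronglyMeasurable
  -- main computation
  have hP : Integrable (φ * (Y ⁻¹' s).indicator fun _ => (1 : ℝ)) μ := by
    have := hφi.bdd_mul (c := 1) hI1i.aestronglyMeasurable
      (ae_of_all _ fun ω => by
        by_cases hω : ω ∈ Y ⁻¹' s <;> simp [Set.indicator_apply, hω])
    exact this.congr (ae_of_all _ fun ω => mul_comm _ _)
  have hgφ : Integrable ((μ[(Y ⁻¹' s).indicator fun _ => (1 : ℝ) | mA]) * φ) μ := by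
    have := hφi.bdd_mul (c := 1) hgi.aestronglyMeasurable hg01
    exact this.congr (ae_of_all _ fun ω => rfl)
  have hI1int : ∫ ω, (Y ⁻¹' s).indicator (fun _ => (1 : ℝ)) ω ∂μ = (μ (Y ⁻¹' s)).toReal := by
    rw [integral_indicator hSh]
    simp [measureReal_def]
  have e0 : ∫ ω in Y ⁻¹' s, φ ω ∂μ
      = ∫ ω, (φ * (Y ⁻¹' s).indicator fun _ => (1 : ℝ)) ω ∂μ := by
    rw [← integral_indicator hSh]
    congr 1
    funext ω
    by_cases hω : ω ∈ Y ⁻¹' s <;> simp [Set.indicator_apply, hω]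
  have e1 : ∫ ω, (φ * (Y ⁻¹' s).indicator fun _ => (1 : ℝ)) ω ∂μ
      = ∫ ω, (φ * μ[(Y ⁻¹' s).indicator fun _ => (1 : ℝ) | m2]) ω ∂μ := by
    rw [← integral_condExp hm2]
    exact integral_congr_ae (condExp_mul_of_stronglyMeasurable_left hφm hP hI1i)
  have e2 : ∫ ω, (φ * μ[(Y ⁻¹' s).indicator fun _ => (1 : ℝ) | m2]) ω ∂μ
      = ∫ ω, ((μ[(Y ⁻¹' s).indicator fun _ => (1 : ℝ) | mA]) * φ) ω ∂μ := by
    apply integral_congr_ae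
    filter_upwards [hmry] with ω hω
    simp only [Pi.mul_apply]
    rw [hω]; ring
  have e3 : ∫ ω, ((μ[(Y ⁻¹' s).indicator fun _ => (1 : ℝ) | mA]) * φ) ω ∂μ
      = ∫ ω, ((μ[(Y ⁻¹' s).indicator fun _ => (1 : ℝ) | mA]) * μ[φ | mA]) ω ∂μ := by
    rw [← integral_condExp hA]
    exact integral_congr_ae (condExp_mul_of_stronglyMeasurable_left
      stronglyMeasurable_condExp hgφ hφi)
  have e4 : ∫ ω, ((μ[(Y ⁻¹' s).indicator fun _ => (1 : ℝ) | mA]) * μ[φ | mA]) ω ∂μ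
      = c * ∫ ω, (μ[(Y ⁻¹' s).indicator fun _ => (1 : ℝ) | mA]) ω ∂μ := by
    rw [← integral_const_mul]
    apply integral_congr_ae
    filter_upwards [hCE] with ω hω
    simp only [Pi.mul_apply]
    rw [hω]; ring
  have e5 : ∫ ω, (μ[(Y ⁻¹' s).indicator fun _ => (1 : ℝ) | mA]) ω ∂μ
      = (μ (Y ⁻¹' s)).toReal := by
    rw [integral_condExp hA, hI1int]
  rw [e0, e1, e2, e3, e4, e5]

end Aux

open TracePursuit

set_option maxHeartbeats 2000000 in
/-- Under the subset LCM and subset CCV assumptions, if `Y ⟂ x_j | X_F` for some `F ⊂ I` and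
`j ∈ Fᶜ`, then for every `h`, `E(x_{j|F}² | Y∈J_h) = var(x_{j|F})`; equivalently
`ζ_{j|F,h} = 1`. -/
theorem zeta_eq_one_under_null {Ω : Type*} [m0 : MeasurableSpace Ω]
    [StandardBorelSpace Ω] [Nonempty Ω]
    (μ : Measure Ω) [IsProbabilityMeasure μ]
    {p H : ℕ} (X : Ω → Fin p → ℝ) (Y : Ω → ℝ)
    (hX : Measurable X) (hY : Measurable Y)
    (hmom : ∀ i, MemLp (fun ω => X ω i) 4 μ)
    (hmean : ∀ i, ∫ ω, X ω i ∂μ = 0)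
    (hpos : (covM μ X Finset.univ).PosDef)
    (J : Fin H → Set ℝ) (hJ : IsSlicePartition J)
    (hph : ∀ h, 0 < sliceP μ Y J h)
    (hLCM : SubsetLCM μ X) (hCCV : SubsetCCV μ X)
    (F : Finset (Fin p)) (j : Fin p) (hj : j ∉ F)
    (hsig : 0 < sigma2 μ X F j)
    (hleF : mF X F ≤ m0)
    (hnull : CondIndepFun (mF X F) hleF Y (fun ω => X ω j) μ) :
    ∀ h : Fin H,
      (∫ ω in Y ⁻¹' J h, xres μ X F j ω ^ 2 ∂μ) / sliceP μ Y J h = sigma2 μ X F j ∧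
      zetaH μ X Y J F j h = 1 := by
  classical
  have hxj : Measurable fun ω => X ω j := (measurable_pi_apply j).comp hX
  have hTm : Measurable[mF X F] fun ω => fun i : F => X ω i.1 :=
    measurable_iff_comap_le.mpr le_rfl
  have hXi : ∀ i : F, Measurable[mF X F] fun ω => X ω i.1 := fun i =>
    ((measurable_pi_apply i).comp hTm : _)
  set L : Ω → ℝ := fun ω => ∑ i : F, thetaJF μ X F j i * X ω i.1 with hLdef
  have hLmA : Measurable[mF X F] L :=
    Finset.measurable_sum Finset.univ fun i _ => (hXi i).const_mul (thetaJF μ X F j i)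
  have hL4 : MemLp L 4 μ := by
    have := memLp_finset_sum (μ := μ) (p := 4) (Finset.univ : Finset F)
      (f := fun i ω => thetaJF μ X F j i * X ω i.1)
      (fun i _ => (hmom i.1).const_mul (thetaJF μ X F j i))
    convert this using 1
  have hxj4 : MemLp (fun ω => X ω j) 4 μ := hmom j
  set r : Ω → ℝ := fun ω => X ω j - L ω with hrdef
  have hr4 : MemLp r 4 μ := hxj4.sub hL4
  have h24 : (2 : ℝ≥0∞) ≤ 4 := by norm_num
  have hr2 : MemLp r 2 μ := hr4.mono_exponent h24
  have hxj2 : MemLp (fun ω => X ω j) 2 μ := hxj4.mono_exponent h24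
  have hL2 : MemLp L 2 μ := hL4.mono_exponent h24
  have hrsq : Integrable (fun ω => r ω ^ 2) μ := hr2.integrable_sq
  have hxjint : Integrable (fun ω => X ω j) μ := hxj2.integrable one_le_two
  -- a.e. identification of the residual
  have hE : (μ[fun ω => X ω j | mF X F]) =ᵐ[μ] L := hLCM F j hj
  have hxres_r : xres μ X F j =ᵐ[μ] r := by
    filter_upwards [hE] with ω hω
    simp only [xres, hrdef]
    rw [hω]
  -- conditional expectation of r² given mF X F is the CCV constant
  obtain ⟨c, hc⟩ := hCCV F j hj
  have hF1i : Integrable (fun ω => X ω j ^ 2) μ := hxj2.integrable_sq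
  have hF2i : Integrable (fun ω => L ω * X ω j) μ := integrable_mul_of_memL2 hL2 hxj2
  have hF3i : Integrable (fun ω => L ω ^ 2) μ := hL2.integrable_sq
  have hLsm : StronglyMeasurable[mF X F] L := hLmA.stronglyMeasurable
  have hpull2 : (μ[L * (fun ω => X ω j) | mF X F])
      =ᵐ[μ] L * μ[fun ω => X ω j | mF X F] :=
    condExp_mul_of_stronglyMeasurable_left hLsm (by exact hF2i) hxjint
  have hF3eq : (μ[(fun ω => L ω ^ 2) | mF X F]) = fun ω => L ω ^ 2 :=
    condExp_of_stronglyMeasurable hleF ((hLmA.pow_const 2).stronglyMeasurable) hF3i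
  have hsplit : (fun ω => r ω ^ 2)
      = ((fun ω => X ω j ^ 2) - (2 : ℝ) • fun ω => L ω * X ω j) + fun ω => L ω ^ 2 := by
    funext ω
    simp only [Pi.add_apply, Pi.sub_apply, Pi.smul_apply, smul_eq_mul, hrdef]
    ring
  have hCE : (μ[fun ω => r ω ^ 2 | mF X F]) =ᵐ[μ] fun _ => c := by
    rw [hsplit]
    have h2F2i : Integrable ((2 : ℝ) • fun ω => L ω * X ω j) μ := hF2i.smul (2 : ℝ)
    have hadd := condExp_add (m := mF X F) (μ := μ) (hF1i.sub h2F2i) hF3i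
    have hsub := condExp_sub (m := mF X F) (μ := μ) hF1i h2F2i
    have hsmul := condExp_smul (m := mF X F) (μ := μ) (2 : ℝ) (fun ω => L ω * X ω j)
    filter_upwards [hadd, hsub, hsmul, hpull2, hE, hc] with ω h1 h2 h3 h4 h5 h6
    rw [h1, Pi.add_apply, h2, Pi.sub_apply, h3, hF3eq]
    simp only [Pi.smul_apply, smul_eq_mul]
    have hF2cond : (μ[(fun ω' => L ω' * X ω' j) | mF X F]) ω
        = L ω * (μ[fun ω' => X ω' j | mF X F]) ω := by
      have hmul : (fun ω' => L ω' * X ω' j) = L * fun ω' => X ω' j := rfl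
      rw [hmul, h4, Pi.mul_apply]
    rw [hF2cond, h5]
    have h6' : (μ[fun ω' => X ω' j ^ 2 | mF X F]) ω
        - ((μ[fun ω' => X ω' j | mF X F]) ω) ^ 2 = c := h6
    rw [h5] at h6'
    nlinarith [h6']
  -- the constant equals σ²
  have hintr2 : ∫ ω, r ω ^ 2 ∂μ = c := by
    rw [← integral_condExp hleF, integral_congr_ae hCE]
    simp
  have hxres_int : ∫ ω, xres μ X F j ω ∂μ = 0 := by
    have h1 : Integrable (μ[fun ω => X ω j | mF X F]) μ := integrable_condExp
    have h2 : ∫ ω, xres μ X F j ω ∂μ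
        = ∫ ω, X ω j ∂μ - ∫ ω, (μ[fun ω' => X ω' j | mF X F]) ω ∂μ :=
      integral_sub hxjint h1
    rw [h2, integral_condExp hleF, hmean j, sub_self]
  have hxsq : ∫ ω, xres μ X F j ω ^ 2 ∂μ = ∫ ω, r ω ^ 2 ∂μ := by
    apply integral_congr_ae
    filter_upwards [hxres_r] with ω hω
    rw [hω]
  have hsigma_c : sigma2 μ X F j = c := by
    rw [sigma2, varF, hxres_int, hxsq, hintr2]
    ring
  -- strong measurability of r² for the enlarged σ-algebra
  have hxjm2 : Measurable[mF X F ⊔ MeasurableSpace.comap (fun ω => X ω j) inferInstance]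
      fun ω => X ω j :=
    (measurable_iff_comap_le.mpr le_rfl).mono le_sup_right le_rfl
  have hLm2 : Measurable[mF X F ⊔ MeasurableSpace.comap (fun ω => X ω j) inferInstance] L :=
    hLmA.mono le_sup_left le_rfl
  have hφm : StronglyMeasurable[mF X F ⊔ MeasurableSpace.comap (fun ω => X ω j) inferInstance]
      fun ω => r ω ^ 2 := ((hxjm2.sub hLm2).pow_const 2).stronglyMeasurable
  -- the slice identity
  intro h
  have hslice0 : ∫ ω in Y ⁻¹' J h, r ω ^ 2 ∂μ = c * (μ (Y ⁻¹' J h)).toReal :=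
    slice_integral_eq (mF X F) _ μ hleF hxj hY hnull rfl (hJ.1 h) hφm hrsq hCE
  have hxslice : ∫ ω in Y ⁻¹' J h, xres μ X F j ω ^ 2 ∂μ = c * (μ (Y ⁻¹' J h)).toReal := by
    rw [← hslice0]
    apply integral_congr_ae
    filter_upwards [Filter.EventuallyEq.restrict (s := Y ⁻¹' J h) hxres_r] with ω hω
    rw [hω]
  have hpS : sliceP μ Y J h = (μ (Y ⁻¹' J h)).toReal := rfl
  have hp0 : sliceP μ Y J h ≠ 0 := (hph h).ne'
  have goal1 : (∫ ω in Y ⁻¹' J h, xres μ X F j ω ^ 2 ∂μ) / sliceP μ Y J h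
      = sigma2 μ X F j := by
    rw [hxslice, hsigma_c, hpS]
    rw [hpS] at hp0
    field_simp
  refine ⟨goal1, ?_⟩
  have hγ : ∀ ω, gammaRes μ X F j ω ^ 2 = xres μ X F j ω ^ 2 / sigma2 μ X F j := by
    intro ω
    rw [gammaRes, div_pow, Real.sq_sqrt hsig.le]
  rw [zetaH]
  have hzint : ∫ ω in Y ⁻¹' J h, gammaRes μ X F j ω ^ 2 ∂μ
      = (∫ ω in Y ⁻¹' J h, xres μ X F j ω ^ 2 ∂μ) / sigma2 μ X F j := by
    rw [← integral_div]
    exact integral_congr_ae (ae_of_all _ fun ω => hγ ω)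
  rw [hzint, hxslice, ← hsigma_c, hpS]
  rw [hpS] at hp0
  field_simp
end
end

section
/- Assume the subset LCM assumption (E(x_j | X_F) = E(x_j X_Fᵀ)Σ_F^{-1}X_F a.s.). If Y ⟂ x_j | X_F for some F ⊂ I and j ∈ F^c, then for every h = 1,…,H, E(x_{j|F} | Y∈J_h) = 0 and E(X_F x_{j|F} | Y∈J_h) = 0; consequently φ_{j|F,h} = 0. -/
open MeasureTheory ProbabilityTheory Matrix Filter Finset
open scoped BigOperators ENNReal

noncomputable section

open TracePursuit

section Wrappers

variable {Ω : Type*} {mΩ : MeasurableSpace Ω} (μ : MeasureTheory.Measure Ω)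

lemma aux_integrable_indicator_one [IsFiniteMeasure μ] {s : Set Ω} (hs : MeasurableSet s) :
    Integrable (s.indicator (fun _ => (1:ℝ))) μ :=
  (integrable_const (1:ℝ)).indicator hs

lemma aux_integral_indicator {s : Set Ω} (hs : MeasurableSet s) (f : Ω → ℝ) :
    ∫ ω, s.indicator f ω ∂μ = ∫ ω in s, f ω ∂μ :=
  integral_indicator hs

lemma aux_integral_add_compl {s : Set Ω} (hs : MeasurableSet s) {f : Ω → ℝ}
    (hf : Integrable f μ) :
    ∫ x in s, f x ∂μ + ∫ x in sᶜ, f x ∂μ = ∫ x, f x ∂μ :=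
  integral_add_compl hs hf

lemma aux_integral_iUnion {s : ℕ → Set Ω} (hm : ∀ i, MeasurableSet (s i))
    (hd : Pairwise (Function.onFun Disjoint s)) {f : Ω → ℝ} (hf : Integrable f μ) :
    ∫ x in ⋃ n, s n, f x ∂μ = ∑' n, ∫ x in s n, f x ∂μ :=
  integral_iUnion hm hd hf.integrableOn

lemma aux_integrableOn {f : Ω → ℝ} (hf : Integrable f μ) (s : Set Ω) :
    IntegrableOn f s μ :=
  hf.integrableOn

lemma aux_integrable_mul_of_memL2 {f g : Ω → ℝ} (hf : MemLp f 2 μ)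
    (hg : MemLp g 2 μ) : Integrable (fun ω => f ω * g ω) μ := by
  have h1 := hf.integrable_sq
  have h2 := hg.integrable_sq
  refine Integrable.mono' ((h1.add h2).div_const 2)
    (hf.aestronglyMeasurable.mul hg.aestronglyMeasurable)
    (Eventually.of_forall fun ω => ?_)
  have habs : ‖f ω * g ω‖ = |f ω| * |g ω| := by rw [Real.norm_eq_abs, abs_mul]
  rw [habs]
  simp only [Pi.add_apply]
  nlinarith [sq_nonneg (|f ω| - |g ω|), sq_abs (f ω), sq_abs (g ω),
    abs_nonneg (f ω), abs_nonneg (g ω)]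

lemma aux_integrable_mul_indicator [IsFiniteMeasure μ] {f : Ω → ℝ} (hf : Integrable f μ)
    {s : Set Ω} (hs : MeasurableSet s) :
    Integrable (fun ω => f ω * s.indicator (fun _ => (1:ℝ)) ω) μ := by
  refine Integrable.mono' hf.norm
    (hf.1.mul (stronglyMeasurable_const.indicator hs).aestronglyMeasurable)
    (Eventually.of_forall fun ω => ?_)
  rw [Real.norm_eq_abs, Real.norm_eq_abs, abs_mul]
  have h1 : |s.indicator (fun _ => (1:ℝ)) ω| ≤ 1 := by
    by_cases hω : ω ∈ s <;> simp [Set.indicator_apply, hω]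
  nlinarith [abs_nonneg (f ω), abs_nonneg (s.indicator (fun _ => (1:ℝ)) ω)]

lemma aux_indicator_expand (B D : Set Ω) (f : Ω → ℝ) (ω : Ω) :
    (B ∩ D).indicator f ω
      = B.indicator (fun _ => (1:ℝ)) ω * f ω * D.indicator (fun _ => (1:ℝ)) ω := by
  by_cases h1 : ω ∈ B <;> by_cases h2 : ω ∈ D <;>
    simp [Set.indicator_apply, Set.mem_inter_iff, h1, h2]

lemma aux_indicator_one_mul (B : Set Ω) (f : Ω → ℝ) (ω : Ω) :
    B.indicator f ω = B.indicator (fun _ => (1:ℝ)) ω * f ω := by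
  by_cases h1 : ω ∈ B <;> simp [Set.indicator_apply, h1]

lemma aux_abs_indicator_one_le (B : Set Ω) (ω : Ω) :
    |B.indicator (fun _ => (1:ℝ)) ω| ≤ 1 := by
  by_cases h1 : ω ∈ B <;> simp [Set.indicator_apply, h1]

end Wrappers

section Aux

variable {Ω : Type*} [m0 : MeasurableSpace Ω] [StandardBorelSpace Ω] [Nonempty Ω]
  (μ : MeasureTheory.Measure Ω) [IsProbabilityMeasure μ]

lemma aux_condExp_indicator_sup {Y g : Ω → ℝ} (hYm : Measurable Y) (hgm : Measurable g)
    {m' : MeasurableSpace Ω} (hm' : m' ≤ m0)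
    (hindep : CondIndepFun m' hm' Y g μ) {s : Set ℝ} (hs : MeasurableSet s) :
    μ[(Y ⁻¹' s).indicator (fun _ => (1:ℝ)) | m' ⊔ MeasurableSpace.comap g inferInstance]
      =ᵐ[μ] μ[(Y ⁻¹' s).indicator (fun _ => (1:ℝ)) | m'] := by
  have hmg : MeasurableSpace.comap g inferInstance ≤ m0 := hgm.comap_le
  have hm'' : m' ⊔ MeasurableSpace.comap g inferInstance ≤ m0 := sup_le hm' hmg
  set ind : Ω → ℝ := (Y ⁻¹' s).indicator (fun _ => (1:ℝ)) with hind_def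
  have hA : MeasurableSet[m0] (Y ⁻¹' s) := hYm hs
  have hind_int : Integrable ind μ := aux_integrable_indicator_one μ hA
  set 𝒞 : Set (Set Ω) :=
    {u | ∃ B t, MeasurableSet[m'] B ∧ MeasurableSet t ∧ u = B ∩ g ⁻¹' t} with h𝒞
  have h_eq : (m' ⊔ MeasurableSpace.comap g inferInstance)
      = MeasurableSpace.generateFrom 𝒞 := by
    refine le_antisymm (sup_le ?_ ?_) (MeasurableSpace.generateFrom_le ?_)
    · intro B hB
      exact MeasurableSpace.measurableSet_generateFrom
        ⟨B, Set.univ, hB, MeasurableSet.univ, by simp⟩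
    · intro D hD
      obtain ⟨t, ht, rfl⟩ := hD
      exact MeasurableSpace.measurableSet_generateFrom
        ⟨Set.univ, t, MeasurableSet.univ, ht, by simp⟩
    · rintro u ⟨B, t, hB, ht, rfl⟩
      exact ((le_sup_left : m' ≤ m' ⊔ MeasurableSpace.comap g inferInstance) B hB).inter
        ((le_sup_right : MeasurableSpace.comap g inferInstance
          ≤ m' ⊔ MeasurableSpace.comap g inferInstance) _ ⟨t, ht, rfl⟩)
  have h_pi : IsPiSystem 𝒞 := by
    rintro u ⟨B, t, hB, ht, rfl⟩ u' ⟨B', t', hB', ht', rfl⟩ -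
    refine ⟨B ∩ B', t ∩ t', hB.inter hB', ht.inter ht', ?_⟩
    rw [Set.preimage_inter]
    ext x; simp only [Set.mem_inter_iff]; tauto
  have key : ∀ u, MeasurableSet[m' ⊔ MeasurableSpace.comap g inferInstance] u →
      ∫ x in u, (μ[ind|m']) x ∂μ = ∫ x in u, ind x ∂μ := by
    refine fun u hu => MeasurableSpace.induction_on_inter
      (m := m' ⊔ MeasurableSpace.comap g inferInstance)
      (C := fun u _ => ∫ x in u, (μ[ind|m']) x ∂μ = ∫ x in u, ind x ∂μ)
      h_eq h_pi ?_ ?_ ?_ ?_ u hu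
    · simp
    · rintro u ⟨B, t, hB, ht, rfl⟩
      have hB0 : MeasurableSet[m0] B := hm' B hB
      have hD0 : MeasurableSet[m0] (g ⁻¹' t) := hgm ht
      set D := g ⁻¹' t with hD_def
      set indD : Ω → ℝ := D.indicator (fun _ => (1:ℝ)) with hindD_def
      set indB : Ω → ℝ := B.indicator (fun _ => (1:ℝ)) with hindB_def
      set indAD : Ω → ℝ := (Y ⁻¹' s ∩ D).indicator (fun _ => (1:ℝ)) with hindAD_def
      have hindD_int : Integrable indD μ := aux_integrable_indicator_one μ hD0
      have hindAD_int : Integrable indAD μ := aux_integrable_indicator_one μ (hA.inter hD0)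
      have hφ_sm : StronglyMeasurable[m'] (fun ω => indB ω * (μ[ind|m']) ω) :=
        (stronglyMeasurable_const.indicator hB).mul stronglyMeasurable_condExp
      have hmul : μ[indAD|m'] =ᵐ[μ] fun ω => (μ[ind|m']) ω * (μ[indD|m']) ω :=
        (condIndepFun_iff_condExp_inter_preimage_eq_mul hYm hgm).mp hindep s t hs ht
      have hint1 : Integrable (fun ω => (indB ω * (μ[ind|m']) ω) * indD ω) μ := by
        refine Integrable.mono' (integrable_condExp (m := m') (f := ind) (μ := μ)).norm
          ((((hφ_sm.mono hm').aestronglyMeasurable).mul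
            ((stronglyMeasurable_const.indicator hD0).aestronglyMeasurable)))
          (Eventually.of_forall fun ω => ?_)
        rw [Real.norm_eq_abs, abs_mul, abs_mul]
        have h1 : |indB ω| ≤ 1 := aux_abs_indicator_one_le B ω
        have h2 : |indD ω| ≤ 1 := aux_abs_indicator_one_le D ω
        have h3 : (0:ℝ) ≤ |(μ[ind|m']) ω| := abs_nonneg _
        calc |indB ω| * |(μ[ind|m']) ω| * |indD ω|
            ≤ 1 * |(μ[ind|m']) ω| * 1 := by
              apply mul_le_mul (mul_le_mul h1 le_rfl h3 zero_le_one) h2 (abs_nonneg _)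
              positivity
          _ = ‖(μ[ind|m']) ω‖ := by rw [Real.norm_eq_abs]; ring
      have hpull : μ[(fun ω => indB ω * (μ[ind|m']) ω) * indD|m']
          =ᵐ[μ] (fun ω => indB ω * (μ[ind|m']) ω) * μ[indD|m'] :=
        condExp_mul_of_stronglyMeasurable_left hφ_sm hint1 hindD_int
      calc ∫ x in B ∩ D, (μ[ind|m']) x ∂μ
          = ∫ ω, (B ∩ D).indicator (fun x => (μ[ind|m']) x) ω ∂μ :=
            (aux_integral_indicator μ (hB0.inter hD0) _).symm
        _ = ∫ ω, (indB ω * (μ[ind|m']) ω) * indD ω ∂μ := by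
            congr 1; funext ω; exact aux_indicator_expand B D _ ω
        _ = ∫ ω, ((fun ω => indB ω * (μ[ind|m']) ω) * indD) ω ∂μ := rfl
        _ = ∫ ω, (μ[(fun ω => indB ω * (μ[ind|m']) ω) * indD|m']) ω ∂μ :=
            (integral_condExp hm').symm
        _ = ∫ ω, ((fun ω => indB ω * (μ[ind|m']) ω) * μ[indD|m']) ω ∂μ :=
            integral_congr_ae hpull
        _ = ∫ ω, indB ω * (μ[indAD|m']) ω ∂μ := by
            refine integral_congr_ae ?_
            filter_upwards [hmul] with ω hω
            simp only [Pi.mul_apply]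
            rw [hω]; ring
        _ = ∫ ω, B.indicator (fun x => (μ[indAD|m']) x) ω ∂μ := by
            congr 1; funext ω; exact (aux_indicator_one_mul B _ ω).symm
        _ = ∫ x in B, (μ[indAD|m']) x ∂μ := aux_integral_indicator μ hB0 _
        _ = ∫ x in B, indAD x ∂μ := setIntegral_condExp hm' hindAD_int hB
        _ = ∫ ω, B.indicator indAD ω ∂μ := (aux_integral_indicator μ hB0 _).symm
        _ = ∫ ω, (B ∩ D).indicator ind ω ∂μ := by
            congr 1; funext ω
            by_cases h1 : ω ∈ B <;> by_cases h2 : ω ∈ D <;> by_cases h3 : ω ∈ Y ⁻¹' s <;>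
              simp [hindAD_def, hind_def, Set.indicator_apply, Set.mem_inter_iff, h1, h2, h3]
        _ = ∫ x in B ∩ D, ind x ∂μ := aux_integral_indicator μ (hB0.inter hD0) _
    · intro v hv hveq
      have hv0 : MeasurableSet[m0] v := hm'' v hv
      have h1 := aux_integral_add_compl μ hv0
        (integrable_condExp : Integrable (μ[ind|m']) μ)
      have h2 := aux_integral_add_compl μ hv0 hind_int
      have h3 : ∫ x, (μ[ind|m']) x ∂μ = ∫ x, ind x ∂μ := integral_condExp hm'
      linarith
    · intro f hdisj hmeas hC
      rw [aux_integral_iUnion μ (fun i => hm'' _ (hmeas i)) hdisj integrable_condExp,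
        aux_integral_iUnion μ (fun i => hm'' _ (hmeas i)) hdisj hind_int]
      exact tsum_congr hC
  exact (ae_eq_condExp_of_forall_setIntegral_eq hm'' hind_int
    (fun u _ _ => aux_integrableOn μ integrable_condExp u)
    (fun u hu _ => key u hu)
    ((stronglyMeasurable_condExp.mono le_sup_left).aestronglyMeasurable)).symm

end Aux

section Aux2

variable {Ω : Type*} [m0 : MeasurableSpace Ω] [StandardBorelSpace Ω] [Nonempty Ω]
  (μ : MeasureTheory.Measure Ω) [IsProbabilityMeasure μ]

lemma aux_setIntegral_mul {Y g : Ω → ℝ} (hYm : Measurable Y) (hgm : Measurable g)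
    {m' : MeasurableSpace Ω} (hm' : m' ≤ m0)
    (hindep : CondIndepFun m' hm' Y g μ) {s : Set ℝ} (hs : MeasurableSet s)
    {W : Ω → ℝ} (hW : StronglyMeasurable[m'] W)
    (hg1 : Integrable g μ)
    (hWg : Integrable (fun ω => W ω * g ω) μ)
    (hWe : Integrable (fun ω => W ω * (μ[g|m']) ω) μ) :
    ∫ ω in Y ⁻¹' s, W ω * g ω ∂μ = ∫ ω in Y ⁻¹' s, W ω * (μ[g|m']) ω ∂μ := by
  have hmg : MeasurableSpace.comap g inferInstance ≤ m0 := hgm.comap_le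
  have hm'' : m' ⊔ MeasurableSpace.comap g inferInstance ≤ m0 := sup_le hm' hmg
  set ind : Ω → ℝ := (Y ⁻¹' s).indicator (fun _ => (1:ℝ)) with hind_def
  have hA : MeasurableSet[m0] (Y ⁻¹' s) := hYm hs
  have hind_int : Integrable ind μ := aux_integrable_indicator_one μ hA
  have hK := aux_condExp_indicator_sup (m0 := m0) μ hYm hgm hm' hindep hs
  -- the conditional probability is between 0 and 1
  have hge0 : (0 : Ω → ℝ) ≤ᵐ[μ] μ[ind|m'] :=
    condExp_nonneg (Eventually.of_forall fun ω =>
      Set.indicator_nonneg (fun _ _ => zero_le_one) ω)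
  have hle1 : μ[ind|m'] ≤ᵐ[μ] fun _ => (1:ℝ) := by
    have h := condExp_mono (m := m') hind_int (integrable_const (1:ℝ))
      (Eventually.of_forall fun ω => by
        by_cases hω : ω ∈ Y ⁻¹' s <;> simp [hind_def, Set.indicator_apply, hω])
    rwa [condExp_const hm'] at h
  have h01 : ∀ᵐ ω ∂μ, |(μ[ind|m']) ω| ≤ 1 := by
    filter_upwards [hge0, hle1] with ω h1 h2
    rw [abs_of_nonneg (by simpa using h1)]
    exact h2
  -- strong measurability of g for the sup σ-algebra
  have hgmg : Measurable[MeasurableSpace.comap g inferInstance] g :=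
    Measurable.of_comap_le le_rfl
  have hg_sm'' : StronglyMeasurable[m' ⊔ MeasurableSpace.comap g inferInstance] g :=
    (hgmg.mono le_sup_right le_rfl).stronglyMeasurable
  have hWg_sm'' : StronglyMeasurable[m' ⊔ MeasurableSpace.comap g inferInstance]
      (fun ω => W ω * g ω) := by
    have h1 := (hW.mono (le_sup_left :
      m' ≤ m' ⊔ MeasurableSpace.comap g inferInstance)).mul hg_sm''
    exact h1
  have hWe_sm' : StronglyMeasurable[m'] (fun ω => W ω * (μ[g|m']) ω) :=
    hW.mul stronglyMeasurable_condExp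
  have hint1 : Integrable (fun ω => (W ω * g ω) * ind ω) μ :=
    aux_integrable_mul_indicator μ hWg hA
  have hint3 : Integrable (fun ω => (W ω * (μ[g|m']) ω) * ind ω) μ :=
    aux_integrable_mul_indicator μ hWe hA
  have hintB : Integrable (fun ω => (W ω * (μ[ind|m']) ω) * g ω) μ := by
    refine Integrable.mono' hWg.norm
      ((((hW.mono hm').aestronglyMeasurable).mul
        (((stronglyMeasurable_condExp (m := m')).mono hm').aestronglyMeasurable)).mul
        hgm.aestronglyMeasurable) ?_
    filter_upwards [h01] with ω hω
    rw [Real.norm_eq_abs, Real.norm_eq_abs, abs_mul, abs_mul, abs_mul]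
    nlinarith [abs_nonneg (W ω), abs_nonneg (g ω), abs_nonneg ((μ[ind|m']) ω),
      mul_nonneg (abs_nonneg (W ω)) (abs_nonneg (g ω))]
  have pullA : μ[(fun ω => W ω * g ω) * ind|m' ⊔ MeasurableSpace.comap g inferInstance]
      =ᵐ[μ] (fun ω => W ω * g ω)
        * μ[ind|m' ⊔ MeasurableSpace.comap g inferInstance] :=
    condExp_mul_of_stronglyMeasurable_left hWg_sm'' hint1 hind_int
  have pullB : μ[(fun ω => W ω * (μ[ind|m']) ω) * g|m']
      =ᵐ[μ] (fun ω => W ω * (μ[ind|m']) ω) * μ[g|m'] :=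
    condExp_mul_of_stronglyMeasurable_left (hW.mul stronglyMeasurable_condExp) hintB hg1
  have pullC : μ[(fun ω => W ω * (μ[g|m']) ω) * ind|m']
      =ᵐ[μ] (fun ω => W ω * (μ[g|m']) ω) * μ[ind|m'] :=
    condExp_mul_of_stronglyMeasurable_left hWe_sm' hint3 hind_int
  calc ∫ ω in Y ⁻¹' s, W ω * g ω ∂μ
      = ∫ ω, ((fun ω => W ω * g ω) * ind) ω ∂μ := by
        rw [← aux_integral_indicator μ hA]
        congr 1; funext ω
        exact (aux_indicator_one_mul _ _ ω).trans (mul_comm _ _)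
    _ = ∫ ω, (μ[(fun ω => W ω * g ω) * ind|m'
          ⊔ MeasurableSpace.comap g inferInstance]) ω ∂μ :=
        (integral_condExp hm'').symm
    _ = ∫ ω, ((fun ω => W ω * g ω)
          * μ[ind|m' ⊔ MeasurableSpace.comap g inferInstance]) ω ∂μ :=
        integral_congr_ae pullA
    _ = ∫ ω, ((fun ω => W ω * (μ[ind|m']) ω) * g) ω ∂μ := by
        refine integral_congr_ae ?_
        filter_upwards [hK] with ω hω
        simp only [Pi.mul_apply]
        rw [hω]; ring
    _ = ∫ ω, (μ[(fun ω => W ω * (μ[ind|m']) ω) * g|m']) ω ∂μ :=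
        (integral_condExp hm').symm
    _ = ∫ ω, ((fun ω => W ω * (μ[ind|m']) ω) * μ[g|m']) ω ∂μ :=
        integral_congr_ae pullB
    _ = ∫ ω, ((fun ω => W ω * (μ[g|m']) ω) * μ[ind|m']) ω ∂μ := by
        refine integral_congr_ae (Eventually.of_forall fun ω => ?_)
        simp only [Pi.mul_apply]; ring
    _ = ∫ ω, (μ[(fun ω => W ω * (μ[g|m']) ω) * ind|m']) ω ∂μ :=
        (integral_congr_ae pullC).symm
    _ = ∫ ω, ((fun ω => W ω * (μ[g|m']) ω) * ind) ω ∂μ :=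
        integral_condExp hm'
    _ = ∫ ω in Y ⁻¹' s, W ω * (μ[g|m']) ω ∂μ := by
        symm
        rw [← aux_integral_indicator μ hA]
        congr 1; funext ω
        exact (aux_indicator_one_mul _ _ ω).trans (mul_comm _ _)

end Aux2


/-- Under the subset LCM assumption, if `Y ⟂ x_j | X_F` for some `F ⊂ I` and `j ∈ Fᶜ`, then
for every `h`, `E(x_{j|F} | Y∈J_h) = 0` and `E(X_F x_{j|F} | Y∈J_h) = 0`; consequently
`φ_{j|F,h} = 0`. -/
theorem phi_eq_zero_under_null {Ω : Type*} [m0 : MeasurableSpace Ω]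
    [StandardBorelSpace Ω] [Nonempty Ω]
    (μ : Measure Ω) [IsProbabilityMeasure μ]
    {p H : ℕ} (X : Ω → Fin p → ℝ) (Y : Ω → ℝ)
    (hX : Measurable X) (hY : Measurable Y)
    (hmom : ∀ i, MemLp (fun ω => X ω i) 4 μ)
    (hmean : ∀ i, ∫ ω, X ω i ∂μ = 0)
    (hpos : (covM μ X Finset.univ).PosDef)
    (J : Fin H → Set ℝ) (hJ : IsSlicePartition J)
    (hph : ∀ h, 0 < sliceP μ Y J h)
    (invS : ∀ F : Finset (Fin p), Matrix F F ℝ)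
    (hinvS : ∀ F, IsInvSqrt (invS F) (covM μ X F))
    (hLCM : SubsetLCM μ X)
    (F : Finset (Fin p)) (j : Fin p) (hj : j ∉ F)
    (hsig : 0 < sigma2 μ X F j)
    (hleF : mF X F ≤ m0)
    (hnull : CondIndepFun (mF X F) hleF Y (fun ω => X ω j) μ) :
    ∀ h : Fin H,
      (∫ ω in Y ⁻¹' J h, xres μ X F j ω ∂μ) / sliceP μ Y J h = 0 ∧
      (∀ i : F, (∫ ω in Y ⁻¹' J h, X ω i.1 * xres μ X F j ω ∂μ) / sliceP μ Y J h = 0) ∧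
      phiH μ X Y J F (invS F) j h = 0 := by
  intro h
  have hgm : Measurable (fun ω => X ω j) := (measurable_pi_apply j).comp hX
  have hg2 : MemLp (fun ω => X ω j) 2 μ :=
    (hmom j).mono_exponent (by norm_num)
  have hg1 : Integrable (fun ω => X ω j) μ := hg2.integrable one_le_two
  have hJh : MeasurableSet (J h) := hJ.1 h
  have hπ : Measurable[mF X F] (fun ω => fun k : F => X ω k.1) :=
    Measurable.of_comap_le le_rfl
  -- first claim
  have hI1 : ∫ ω in Y ⁻¹' J h, xres μ X F j ω ∂μ = 0 := by
    have hmain := aux_setIntegral_mul (m0 := m0) μ hY hgm hleF hnull hJh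
      (W := fun _ => (1:ℝ)) stronglyMeasurable_const hg1 (by simpa using hg1)
      (by simpa using (integrable_condExp :
        Integrable (μ[(fun ω => X ω j)|mF X F]) μ))
    simp only [one_mul] at hmain
    have hsplit : (fun ω => xres μ X F j ω)
        = fun ω => X ω j - (μ[(fun ω => X ω j)|mF X F]) ω := by
      funext ω; simp only [xres]
    rw [hsplit, integral_sub (aux_integrableOn μ hg1 _)
      (aux_integrableOn μ integrable_condExp _), hmain, sub_self]
  -- second claim
  have hI2 : ∀ i : F, ∫ ω in Y ⁻¹' J h, X ω i.1 * xres μ X F j ω ∂μ = 0 := by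
    intro i
    have hWm : Measurable[mF X F] (fun ω => X ω i.1) := (measurable_pi_apply i).comp hπ
    have hW : StronglyMeasurable[mF X F] (fun ω => X ω i.1) := hWm.stronglyMeasurable
    have hW2 : MemLp (fun ω => X ω i.1) 2 μ :=
      (hmom i.1).mono_exponent (by norm_num)
    have hWg : Integrable (fun ω => X ω i.1 * X ω j) μ :=
      aux_integrable_mul_of_memL2 μ hW2 hg2
    have hlcm := hLCM F j hj
    have hsum_int : Integrable
        (fun ω => X ω i.1 * ∑ k : F, thetaJF μ X F j k * X ω k.1) μ := by
      have hrw : (fun ω => X ω i.1 * ∑ k : F, thetaJF μ X F j k * X ω k.1)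
          = fun ω => ∑ k : F, thetaJF μ X F j k * (X ω i.1 * X ω k.1) := by
        funext ω; rw [Finset.mul_sum]; exact Finset.sum_congr rfl fun k _ => by ring
      rw [hrw]
      exact integrable_finset_sum _ fun k _ =>
        (aux_integrable_mul_of_memL2 μ ((hmom i.1).mono_exponent (by norm_num))
          ((hmom k.1).mono_exponent (by norm_num))).const_mul _
    have hWe : Integrable (fun ω => X ω i.1 * (μ[(fun ω => X ω j)|mF X F]) ω) μ :=
      hsum_int.congr (by filter_upwards [hlcm] with ω hω; rw [hω])
    have hmain := aux_setIntegral_mul (m0 := m0) μ hY hgm hleF hnull hJh hW hg1 hWg hWe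
    have hsplit : (fun ω => X ω i.1 * xres μ X F j ω)
        = fun ω => X ω i.1 * X ω j - X ω i.1 * (μ[(fun ω => X ω j)|mF X F]) ω := by
      funext ω; simp only [xres]; ring
    rw [hsplit, integral_sub (aux_integrableOn μ hWg _)
      (aux_integrableOn μ hWe _), hmain, sub_self]
  refine ⟨by rw [hI1, zero_div], fun i => by rw [hI2 i, zero_div], ?_⟩
  -- third claim
  have hgamma : gammaH μ X Y J F j h = 0 := by
    simp only [gammaH, gammaRes]
    rw [integral_div, hI1, zero_div, zero_div]
  have hxg : ∀ i : F, sliceXGamma μ X Y J F j h i = 0 := by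
    intro i
    simp only [sliceXGamma, gammaRes, ← mul_div_assoc]
    rw [integral_div, hI2 i, zero_div, zero_div]
  simp only [phiH]
  have hv : (fun i : F => sliceU μ X Y J F h i * gammaH μ X Y J F j h
      - sliceXGamma μ X Y J F j h i) = 0 := by
    funext i; rw [hgamma, hxg i, mul_zero, sub_zero]; rfl
  rw [hv, Matrix.mulVec_zero]
end
end

section
/- Assume the subset LCM assumption (E(x_j | X_F) = E(x_j X_Fᵀ)Σ_F^{-1}X_F a.s.). For M^{DR2}_F = Σ_{h=1}^H p_h Σ_F^{-1/2} U_{F,h} U_{F,h}ᵀ Σ_F^{-1/2}, and for any F ⊂ I and j ∈ F^c, trace{(M^{DR2}_{F∪{j}})²} = trace{(M^{DR2}_F)²} + 2 ι_{j|F}ᵀι_{j|F} + ϱ_{j|F}². -/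
open MeasureTheory ProbabilityTheory Matrix Filter Finset
open scoped BigOperators ENNReal

noncomputable section

namespace TracePursuit

/-- `M^{DR2}_F = Σ_h p_h Σ_F^{-1/2} U_{F,h} U_{F,h}ᵀ Σ_F^{-1/2}`. -/
def MDR2 {Ω : Type*} [MeasurableSpace Ω] (μ : Measure Ω) {p H : ℕ}
    (X : Ω → Fin p → ℝ) (Y : Ω → ℝ) (J : Fin H → Set ℝ) (F : Finset (Fin p))
    (S : Matrix F F ℝ) : Matrix F F ℝ :=
  ∑ h, sliceP μ Y J h • (S * vecMulVec (sliceU μ X Y J F h) (sliceU μ X Y J F h) * S)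

end TracePursuit

open TracePursuit


namespace TPAux
open MeasureTheory


lemma trace_vmv {n : Type*} [Fintype n] (a b c d : n → ℝ) :
    (vecMulVec a b * vecMulVec c d).trace = (b ⬝ᵥ c) * (a ⬝ᵥ d) := by
  simp only [Matrix.trace, Matrix.diag, Matrix.mul_apply, vecMulVec_apply, dotProduct]
  rw [Finset.sum_mul_sum, Finset.sum_comm]
  exact Finset.sum_congr rfl fun m _ => Finset.sum_congr rfl fun i _ => by ring

lemma conj_vmv {n : Type*} [Fintype n] {S : Matrix n n ℝ} (hs : S.IsSymm) (u : n → ℝ) :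
    S * vecMulVec u u * S = vecMulVec (S *ᵥ u) (S *ᵥ u) := by
  ext i k
  simp only [Matrix.mul_apply, vecMulVec_apply, mulVec, dotProduct]
  rw [Finset.sum_mul_sum, Finset.sum_comm]
  refine Finset.sum_congr rfl fun a _ => ?_
  rw [Finset.sum_mul]
  refine Finset.sum_congr rfl fun b _ => ?_
  rw [hs.apply a k]
  ring

lemma vecMul_symm {n : Type*} [Fintype n] {S : Matrix n n ℝ} (hs : S.IsSymm) (u : n → ℝ) :
    u ᵥ* S = S *ᵥ u := by
  ext x
  simp only [vecMul, mulVec, dotProduct]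
  exact Finset.sum_congr rfl fun y _ => by rw [hs.apply x y]; ring

lemma dot_SS {n : Type*} [Fintype n] {S Q : Matrix n n ℝ} (hs : S.IsSymm) (hq : S * S = Q)
    (u v : n → ℝ) : (S *ᵥ u) ⬝ᵥ (S *ᵥ v) = u ⬝ᵥ Q *ᵥ v := by
  rw [← hq, ← Matrix.mulVec_mulVec, Matrix.dotProduct_mulVec u, vecMul_symm hs]

lemma dot_Q_comm {n : Type*} [Fintype n] {S Q : Matrix n n ℝ} (hs : S.IsSymm) (hq : S * S = Q)
    (u v : n → ℝ) : u ⬝ᵥ Q *ᵥ v = v ⬝ᵥ Q *ᵥ u := by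
  rw [← dot_SS hs hq, ← dot_SS hs hq, dotProduct_comm]

lemma aux_trace {n : Type*} [Fintype n] [DecidableEq n] {H : ℕ} (q : Fin H → ℝ)
    (u : Fin H → n → ℝ) {S Q : Matrix n n ℝ} (hs : S.IsSymm) (hq : S * S = Q) :
    ((∑ h, q h • (S * vecMulVec (u h) (u h) * S)) ^ 2).trace
      = ∑ h, ∑ h', q h * q h' * (u h ⬝ᵥ Q *ᵥ u h') ^ 2 := by
  simp only [conj_vmv hs]
  rw [sq, Finset.sum_mul_sum, Matrix.trace_sum]
  refine Finset.sum_congr rfl fun h _ => ?_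
  rw [Matrix.trace_sum]
  refine Finset.sum_congr rfl fun h' _ => ?_
  rw [smul_mul_assoc, mul_smul_comm, Matrix.trace_smul, Matrix.trace_smul, trace_vmv]
  rw [dot_SS hs hq]
  simp only [smul_eq_mul]; ring

lemma aux_iota {n : Type*} [Fintype n] {H : ℕ} (q γ : Fin H → ℝ) (u : Fin H → n → ℝ)
    {S Q : Matrix n n ℝ} (hs : S.IsSymm) (hq : S * S = Q) :
    (∑ h, q h • (γ h • S *ᵥ u h)) ⬝ᵥ (∑ h, q h • (γ h • S *ᵥ u h))
      = ∑ h, ∑ h', q h * γ h * (q h' * γ h') * (u h ⬝ᵥ Q *ᵥ u h') := by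
  simp only [dotProduct, Finset.sum_apply, Pi.smul_apply, smul_eq_mul]
  simp only [Finset.sum_mul_sum]
  rw [Finset.sum_comm]
  refine Finset.sum_congr rfl fun h _ => ?_
  rw [Finset.sum_comm]
  refine Finset.sum_congr rfl fun h' _ => ?_
  rw [show (∑ i : n, u h i * (Q *ᵥ u h') i) = (S *ᵥ u h) ⬝ᵥ (S *ᵥ u h') from
    (dot_SS hs hq _ _).symm, dotProduct, Finset.mul_sum]
  exact Finset.sum_congr rfl fun x _ => by ring


variable {Ω : Type*} [m0 : MeasurableSpace Ω] (μ : Measure Ω) {p : ℕ} (X : Ω → Fin p → ℝ)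


lemma covM_apply (F : Finset (Fin p)) (a b : F) :
    covM μ X F a b = ∫ ω, X ω a.1 * X ω b.1 ∂μ := rfl

lemma covM_isSymm (F : Finset (Fin p)) : (covM μ X F).IsSymm := by
  ext a b
  simp only [Matrix.transpose_apply, covM_apply]
  congr 1; funext ω; ring

lemma sum_extend (F : Finset (Fin p)) (x : F → ℝ) (g : Fin p → ℝ) :
    (∑ i : {i // i ∈ (Finset.univ : Finset (Fin p))},
        (if h : i.1 ∈ F then x ⟨i.1, h⟩ else 0) * g i.1)
      = ∑ a : F, x a * g a.1 := by
  calc (∑ i : {i // i ∈ (Finset.univ : Finset (Fin p))},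
        (if h : i.1 ∈ F then x ⟨i.1, h⟩ else 0) * g i.1)
      = ∑ i ∈ Finset.univ, (if h : i ∈ F then x ⟨i, h⟩ else 0) * g i :=
        Finset.sum_coe_sort _ (fun i => (if h : i ∈ F then x ⟨i, h⟩ else 0) * g i)
    _ = ∑ i ∈ F, (if h : i ∈ F then x ⟨i, h⟩ else 0) * g i :=
        (Finset.sum_subset (Finset.subset_univ F)
          (fun i _ hi => by rw [dif_neg hi, zero_mul])).symm
    _ = ∑ a : F, (if h : a.1 ∈ F then x ⟨a.1, h⟩ else 0) * g a.1 :=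
        (Finset.sum_coe_sort F (fun i => (if h : i ∈ F then x ⟨i, h⟩ else 0) * g i)).symm
    _ = ∑ a : F, x a * g a.1 :=
        Finset.sum_congr rfl fun a _ => by rw [dif_pos a.2]

lemma covM_posDef (hpos : (covM μ X Finset.univ).PosDef) (F : Finset (Fin p)) :
    (covM μ X F).PosDef := by
  refine Matrix.posDef_iff_dotProduct_mulVec.mpr ⟨?_, ?_⟩
  · rw [Matrix.IsHermitian, Matrix.conjTranspose_eq_transpose_of_trivial]
    exact covM_isSymm μ X F
  · intro x hx
    set z : {i // i ∈ (Finset.univ : Finset (Fin p))} → ℝ :=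
      fun i => if h : i.1 ∈ F then x ⟨i.1, h⟩ else 0 with hz
    have hzne : z ≠ 0 := by
      obtain ⟨a, ha⟩ := Function.ne_iff.mp hx
      refine Function.ne_iff.mpr ⟨⟨a.1, Finset.mem_univ _⟩, ?_⟩
      simpa [hz, dif_pos a.2] using ha
    have := hpos.dotProduct_mulVec_pos hzne
    have hq : dotProduct (star z) (covM μ X Finset.univ *ᵥ z)
        = dotProduct (star x) (covM μ X F *ᵥ x) := by
      simp only [star_trivial, dotProduct, Matrix.mulVec]
      calc ∑ i, z i * ∑ k, covM μ X Finset.univ i k * z k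
          = ∑ i : {i // i ∈ (Finset.univ : Finset (Fin p))},
              z i * ∑ b : F, x b * (∫ ω, X ω i.1 * X ω b.1 ∂μ) := by
            refine Finset.sum_congr rfl fun i _ => ?_
            congr 1
            calc ∑ k, covM μ X Finset.univ i k * z k
                = ∑ k : {i // i ∈ (Finset.univ : Finset (Fin p))},
                    z k * (∫ ω, X ω i.1 * X ω k.1 ∂μ) := by
                  exact Finset.sum_congr rfl fun k _ => by rw [covM_apply]; ring
              _ = ∑ b : F, x b * (∫ ω, X ω i.1 * X ω b.1 ∂μ) :=
                  sum_extend F x (fun k => ∫ ω, X ω i.1 * X ω k ∂μ)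
        _ = ∑ a : F, x a * ∑ b : F, x b * (∫ ω, X ω a.1 * X ω b.1 ∂μ) :=
            sum_extend F x (fun i => ∑ b : F, x b * (∫ ω, X ω i * X ω b.1 ∂μ))
        _ = ∑ i, x i * ∑ k, covM μ X F i k * x k := by
            refine Finset.sum_congr rfl fun a _ => ?_
            congr 1
            exact Finset.sum_congr rfl fun b _ => by rw [covM_apply]; ring
    rw [← hq]
    simpa using this

lemma covM_isUnit (hpos : (covM μ X Finset.univ).PosDef) (F : Finset (Fin p)) :
    IsUnit (covM μ X F) :=
  (covM_posDef μ X hpos F).isUnit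



lemma int1 [IsProbabilityMeasure μ] (hmom : ∀ i, MemLp (fun ω => X ω i) 4 μ) (i : Fin p) :
    Integrable (fun ω => X ω i) μ :=
  memLp_one_iff_integrable.mp ((hmom i).mono_exponent (by norm_num))

lemma int2 [IsProbabilityMeasure μ] (hmom : ∀ i, MemLp (fun ω => X ω i) 4 μ) (i k : Fin p) :
    Integrable (fun ω => X ω i * X ω k) μ := by
  have h2 : ∀ i, MemLp (fun ω => X ω i) 2 μ :=
    fun i => (hmom i).mono_exponent (by norm_num)
  haveI : ENNReal.HolderTriple 2 2 1 := ⟨by rw [inv_one]; exact ENNReal.inv_two_add_inv_two⟩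
  exact (h2 i).integrable_mul (h2 k)

/-- The residual with explicit linear predictor. -/
def rres (F : Finset (Fin p)) (j : Fin p) : Ω → ℝ :=
  fun ω => X ω j - ∑ i : F, thetaJF μ X F j i * X ω i.1

lemma xres_ae (hLCM : SubsetLCM μ X) (F : Finset (Fin p)) {j : Fin p} (hj : j ∉ F) :
    xres μ X F j =ᵐ[μ] rres μ X F j := by
  filter_upwards [hLCM F j hj] with ω hω
  simp only [xres, rres, hω]

lemma integrable_linpred [IsProbabilityMeasure μ]
    (hmom : ∀ i, MemLp (fun ω => X ω i) 4 μ) (F : Finset (Fin p)) (j : Fin p) :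
    Integrable (fun ω => ∑ i : F, thetaJF μ X F j i * X ω i.1) μ :=
  integrable_finset_sum _ fun i _ => ((int1 μ X hmom i.1).const_mul _)

lemma integrable_rres [IsProbabilityMeasure μ]
    (hmom : ∀ i, MemLp (fun ω => X ω i) 4 μ) (F : Finset (Fin p)) (j : Fin p) :
    Integrable (rres μ X F j) μ :=
  (int1 μ X hmom j).sub (integrable_linpred μ X hmom F j)

lemma integral_rres [IsProbabilityMeasure μ]
    (hmom : ∀ i, MemLp (fun ω => X ω i) 4 μ) (hmean : ∀ i, ∫ ω, X ω i ∂μ = 0)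
    (F : Finset (Fin p)) (j : Fin p) :
    ∫ ω, rres μ X F j ω ∂μ = 0 := by
  rw [show rres μ X F j = fun ω => X ω j - ∑ i : F, thetaJF μ X F j i * X ω i.1 from rfl]
  rw [integral_sub (int1 μ X hmom j) (integrable_linpred μ X hmom F j)]
  rw [integral_finset_sum _ fun i _ => ((int1 μ X hmom i.1).const_mul _)]
  simp [MeasureTheory.integral_const_mul, hmean]

lemma sigma2_eq [IsProbabilityMeasure μ]
    (hmom : ∀ i, MemLp (fun ω => X ω i) 4 μ) (hmean : ∀ i, ∫ ω, X ω i ∂μ = 0)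
    (hLCM : SubsetLCM μ X) (F : Finset (Fin p)) {j : Fin p} (hj : j ∉ F) :
    sigma2 μ X F j = ∫ ω, rres μ X F j ω ^ 2 ∂μ := by
  have h1 : ∫ ω, xres μ X F j ω ∂μ = ∫ ω, rres μ X F j ω ∂μ :=
    integral_congr_ae (xres_ae μ X hLCM F hj)
  have h2 : ∫ ω, xres μ X F j ω ^ 2 ∂μ = ∫ ω, rres μ X F j ω ^ 2 ∂μ :=
    integral_congr_ae ((xres_ae μ X hLCM F hj).mono fun ω hω => by simp only []; rw [hω])
  rw [sigma2, varF, h1, h2, integral_rres μ X hmom hmean F j]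
  ring



lemma covM_mulVec_theta (F : Finset (Fin p)) (hunit : IsUnit (covM μ X F)) (j : Fin p) :
    covM μ X F *ᵥ thetaJF μ X F j = fun a => ∫ ω, X ω a.1 * X ω j ∂μ := by
  have hv : (fun i : F => ∫ ω, X ω j * X ω i.1 ∂μ) = fun i : F => ∫ ω, X ω i.1 * X ω j ∂μ := by
    funext i; congr 1; funext ω; ring
  rw [thetaJF, hv, Matrix.mulVec_mulVec, Matrix.mul_nonsing_inv _
    ((Matrix.isUnit_iff_isUnit_det _).mp hunit), Matrix.one_mulVec]


lemma EXjXj [IsProbabilityMeasure μ]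
    (hmom : ∀ i, MemLp (fun ω => X ω i) 4 μ) (hmean : ∀ i, ∫ ω, X ω i ∂μ = 0)
    (hLCM : SubsetLCM μ X) (F : Finset (Fin p)) {j : Fin p} (hj : j ∉ F)
    (hunit : IsUnit (covM μ X F)) :
    ∫ ω, X ω j * X ω j ∂μ
      = thetaJF μ X F j ⬝ᵥ (fun a : F => ∫ ω, X ω a.1 * X ω j ∂μ) + sigma2 μ X F j := by
  set θ := thetaJF μ X F j with hθ
  set v : F → ℝ := fun a => ∫ ω, X ω a.1 * X ω j ∂μ with hvdef
  have hXg : ∫ ω, X ω j * (∑ i : F, θ i * X ω i.1) ∂μ = θ ⬝ᵥ v := by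
    have hpt : (fun ω => X ω j * (∑ i : F, θ i * X ω i.1))
        = fun ω => ∑ i : F, θ i * (X ω i.1 * X ω j) := by
      funext ω; rw [Finset.mul_sum]; exact Finset.sum_congr rfl fun i _ => by ring
    rw [hpt, integral_finset_sum _ fun i _ => ((int2 μ X hmom i.1 j).const_mul _)]
    simp only [MeasureTheory.integral_const_mul]
    rfl
  have hgg : ∫ ω, (∑ i : F, θ i * X ω i.1) * (∑ i : F, θ i * X ω i.1) ∂μ
      = θ ⬝ᵥ (covM μ X F *ᵥ θ) := by
    have hpt : (fun ω => (∑ i : F, θ i * X ω i.1) * (∑ i : F, θ i * X ω i.1))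
        = fun ω => ∑ a : F, ∑ b : F, (θ a * θ b) * (X ω a.1 * X ω b.1) := by
      funext ω; rw [Finset.sum_mul_sum]
      exact Finset.sum_congr rfl fun a _ => Finset.sum_congr rfl fun b _ => by ring
    rw [hpt, integral_finset_sum _ fun a _ => integrable_finset_sum _
      fun b _ => ((int2 μ X hmom a.1 b.1).const_mul _)]
    simp only [dotProduct, Matrix.mulVec, Finset.mul_sum]
    refine Finset.sum_congr rfl fun a _ => ?_
    rw [integral_finset_sum _ fun b _ => ((int2 μ X hmom a.1 b.1).const_mul _)]
    refine Finset.sum_congr rfl fun b _ => ?_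
    rw [MeasureTheory.integral_const_mul, covM_apply]; ring
  have hs2 : sigma2 μ X F j = ∫ ω, rres μ X F j ω ^ 2 ∂μ :=
    sigma2_eq μ X hmom hmean hLCM F hj
  have hpt2 : (fun ω => rres μ X F j ω ^ 2)
      = fun ω => X ω j * X ω j - 2 * (X ω j * (∑ i : F, θ i * X ω i.1))
          + (∑ i : F, θ i * X ω i.1) * (∑ i : F, θ i * X ω i.1) := by
    funext ω; simp only [rres]; ring
  have hIg : Integrable (fun ω => ∑ i : F, θ i * X ω i.1) μ := integrable_linpred μ X hmom F j
  have hIXg : Integrable (fun ω => X ω j * (∑ i : F, θ i * X ω i.1)) μ := by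
    have hpt : (fun ω => X ω j * (∑ i : F, θ i * X ω i.1))
        = fun ω => ∑ i : F, θ i * (X ω j * X ω i.1) := by
      funext ω; rw [Finset.mul_sum]; exact Finset.sum_congr rfl fun i _ => by ring
    rw [hpt]; exact integrable_finset_sum _ fun i _ => ((int2 μ X hmom j i.1).const_mul _)
  have hIgg : Integrable (fun ω => (∑ i : F, θ i * X ω i.1) * (∑ i : F, θ i * X ω i.1)) μ := by
    have hpt : (fun ω => (∑ i : F, θ i * X ω i.1) * (∑ i : F, θ i * X ω i.1))
        = fun ω => ∑ a : F, ∑ b : F, (θ a * θ b) * (X ω a.1 * X ω b.1) := by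
      funext ω; rw [Finset.sum_mul_sum]
      exact Finset.sum_congr rfl fun a _ => Finset.sum_congr rfl fun b _ => by ring
    rw [hpt]
    exact integrable_finset_sum _ fun a _ => integrable_finset_sum _
      fun b _ => ((int2 μ X hmom a.1 b.1).const_mul _)
  have hI2 : Integrable (fun ω => 2 * (X ω j * (∑ i : F, θ i * X ω i.1))) μ :=
    hIXg.const_mul 2
  have hI1 : Integrable
      (fun ω => X ω j * X ω j - 2 * (X ω j * (∑ i : F, θ i * X ω i.1))) μ :=
    (int2 μ X hmom j j).sub hI2
  have hint : ∫ ω, rres μ X F j ω ^ 2 ∂μ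
      = ∫ ω, X ω j * X ω j ∂μ - 2 * ∫ ω, X ω j * (∑ i : F, θ i * X ω i.1) ∂μ
        + ∫ ω, (∑ i : F, θ i * X ω i.1) * (∑ i : F, θ i * X ω i.1) ∂μ := by
    rw [hpt2, integral_add hI1 hIgg, integral_sub (int2 μ X hmom j j) hI2,
      MeasureTheory.integral_const_mul]
  rw [hs2, hint, hXg, hgg, covM_mulVec_theta μ X F hunit j]
  ring


lemma sliceU_insert_self [IsProbabilityMeasure μ] {H : ℕ} (Y : Ω → ℝ) (J : Fin H → Set ℝ)
    (hmom : ∀ i, MemLp (fun ω => X ω i) 4 μ)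
    (hph : ∀ h, 0 < sliceP μ Y J h) (hLCM : SubsetLCM μ X)
    (F : Finset (Fin p)) {j : Fin p} (hj : j ∉ F) (hsig : 0 < sigma2 μ X F j) (h : Fin H) :
    sliceU μ X Y J (insert j F) h ⟨j, Finset.mem_insert_self j F⟩
      = thetaJF μ X F j ⬝ᵥ sliceU μ X Y J F h
        + Real.sqrt (sigma2 μ X F j) * gammaH μ X Y J F j h := by
  have hp := (hph h).ne'
  have hss : (0:ℝ) < Real.sqrt (sigma2 μ X F j) := Real.sqrt_pos.mpr hsig
  have hrs : ∫ ω in Y ⁻¹' J h, rres μ X F j ω ∂μ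
      = Real.sqrt (sigma2 μ X F j) * (gammaH μ X Y J F j h * sliceP μ Y J h) := by
    have h1 : ∫ ω in Y ⁻¹' J h, rres μ X F j ω ∂μ
        = ∫ ω in Y ⁻¹' J h, xres μ X F j ω ∂μ :=
      integral_congr_ae (ae_restrict_of_ae (xres_ae μ X hLCM F hj).symm)
    have h2 : ∀ ω, xres μ X F j ω = Real.sqrt (sigma2 μ X F j) * gammaRes μ X F j ω := by
      intro ω; rw [gammaRes]; field_simp
    rw [h1]
    simp_rw [h2]
    rw [MeasureTheory.integral_const_mul, gammaH]
    field_simp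
  have hXj : (fun ω => X ω j)
      = fun ω => (∑ i : F, thetaJF μ X F j i * X ω i.1) + rres μ X F j ω := by
    funext ω; rw [rres]; ring
  have hI : ∫ ω in Y ⁻¹' J h, X ω j ∂μ
      = (∑ i : F, thetaJF μ X F j i * ∫ ω in Y ⁻¹' J h, X ω i.1 ∂μ)
        + Real.sqrt (sigma2 μ X F j) * (gammaH μ X Y J F j h * sliceP μ Y J h) := by
    rw [hXj, integral_add ((integrable_linpred μ X hmom F j).restrict)
      ((integrable_rres μ X hmom F j).restrict), hrs,
      integral_finset_sum _ fun i _ => ((int1 μ X hmom i.1).restrict.const_mul _)]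
    simp only [MeasureTheory.integral_const_mul]
  show (∫ ω in Y ⁻¹' J h, X ω j ∂μ) / sliceP μ Y J h = _
  rw [hI, add_div, Finset.sum_div]
  congr 1
  · exact Finset.sum_congr rfl fun i _ => by rw [mul_div_assoc]; rfl
  · field_simp


/-- Explicit block inverse of the covariance matrix on `insert j F`. -/
def Bmat (F : Finset (Fin p)) (j : Fin p) : Matrix (Option F) (Option F) ℝ :=
  fun x y =>
    match x, y with
    | some a, some b => (covM μ X F)⁻¹ a b
        + thetaJF μ X F j a * thetaJF μ X F j b / sigma2 μ X F j
    | some a, none => -(thetaJF μ X F j a) / sigma2 μ X F j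
    | none, some b => -(thetaJF μ X F j b) / sigma2 μ X F j
    | none, none => 1 / sigma2 μ X F j

lemma covM_insert_inv [IsProbabilityMeasure μ]
    (hmom : ∀ i, MemLp (fun ω => X ω i) 4 μ) (hmean : ∀ i, ∫ ω, X ω i ∂μ = 0)
    (hLCM : SubsetLCM μ X) (hpos : (covM μ X Finset.univ).PosDef)
    (F : Finset (Fin p)) {j : Fin p} (hj : j ∉ F) (hsig : 0 < sigma2 μ X F j) :
    (covM μ X (insert j F))⁻¹
      = (Bmat μ X F j).submatrix (Finset.subtypeInsertEquivOption hj)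
          (Finset.subtypeInsertEquivOption hj) := by
  set e := Finset.subtypeInsertEquivOption hj with he
  set θ := thetaJF μ X F j with hθ
  set s2 := sigma2 μ X F j with hs2
  have hs2ne : s2 ≠ 0 := hsig.ne'
  have hunit : IsUnit (covM μ X F) := covM_isUnit μ X hpos F
  have hdet : IsUnit (covM μ X F).det := (Matrix.isUnit_iff_isUnit_det _).mp hunit
  have hmul : covM μ X F * (covM μ X F)⁻¹ = 1 := Matrix.mul_nonsing_inv _ hdet
  have hmul2 : (covM μ X F)⁻¹ * covM μ X F = 1 := Matrix.nonsing_inv_mul _ hdet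
  have hSiSymm : ((covM μ X F)⁻¹).IsSymm := by
    rw [Matrix.IsSymm, Matrix.transpose_nonsing_inv, (covM_isSymm μ X F).eq]
  have hv : ∀ a : F, (∫ ω, X ω a.1 * X ω j ∂μ) = (covM μ X F *ᵥ θ) a := by
    intro a; rw [covM_mulVec_theta μ X F hunit j]
  have hvSi : ∀ b : F, (∑ c : F, (covM μ X F *ᵥ θ) c * (covM μ X F)⁻¹ c b) = θ b := by
    intro b
    have : (∑ c : F, (covM μ X F *ᵥ θ) c * (covM μ X F)⁻¹ c b)
        = ((covM μ X F *ᵥ θ) ᵥ* (covM μ X F)⁻¹) b := rfl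
    rw [this, vecMul_symm hSiSymm, Matrix.mulVec_mulVec, hmul2, Matrix.one_mulVec]
  have hvθ : (∑ c : F, (covM μ X F *ᵥ θ) c * θ c) = θ ⬝ᵥ (covM μ X F *ᵥ θ) := by
    rw [dotProduct]; exact Finset.sum_congr rfl fun c _ => by ring
  have hjj : (∫ ω, X ω j * X ω j ∂μ) = θ ⬝ᵥ (covM μ X F *ᵥ θ) + s2 := by
    rw [EXjXj μ X hmom hmean hLCM F hj hunit]
    congr 1
    rw [← hθ]
    exact congrArg _ (funext fun a => hv a)
  have hprod : (covM μ X (insert j F)).submatrix e.symm e.symm * Bmat μ X F j = 1 := by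
    ext x y
    rw [Matrix.mul_apply, Fintype.sum_option]
    cases x with
    | none =>
      cases y with
      | none =>
        simp only [Matrix.submatrix_apply, Bmat, Matrix.one_apply_eq]
        have h1 : ∀ c : F, (covM μ X (insert j F)) (e.symm none) (e.symm (some c))
            = (covM μ X F *ᵥ θ) c := by
          intro c
          rw [← hv c]
          show (∫ ω, X ω j * X ω c.1 ∂μ) = ∫ ω, X ω c.1 * X ω j ∂μ
          congr 1; funext ω; ring
        have h0 : (covM μ X (insert j F)) (e.symm none) (e.symm none)
            = θ ⬝ᵥ (covM μ X F *ᵥ θ) + s2 := hjj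
        rw [h0]
        simp only [h1]
        rw [show (∑ c : F, (covM μ X F *ᵥ θ) c * (-(θ c) / s2))
            = -(∑ c : F, (covM μ X F *ᵥ θ) c * θ c) / s2 by
          rw [eq_div_iff hs2ne, Finset.sum_mul, ← Finset.sum_neg_distrib]
          exact Finset.sum_congr rfl fun c _ => by field_simp, hvθ]
        rw [← hs2]
        field_simp
        ring
      | some b =>
        simp only [Matrix.submatrix_apply, Bmat]
        have hone : (1 : Matrix (Option F) (Option F) ℝ) none (some b) = 0 := by
          simp [Matrix.one_apply]
        rw [hone]
        have h1 : ∀ c : F, (covM μ X (insert j F)) (e.symm none) (e.symm (some c))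
            = (covM μ X F *ᵥ θ) c := by
          intro c
          rw [← hv c]
          show (∫ ω, X ω j * X ω c.1 ∂μ) = ∫ ω, X ω c.1 * X ω j ∂μ
          congr 1; funext ω; ring
        have h0 : (covM μ X (insert j F)) (e.symm none) (e.symm none)
            = θ ⬝ᵥ (covM μ X F *ᵥ θ) + s2 := hjj
        rw [h0]
        simp only [h1]
        rw [show (∑ c : F, (covM μ X F *ᵥ θ) c * ((covM μ X F)⁻¹ c b + θ c * θ b / s2))
            = (∑ c : F, (covM μ X F *ᵥ θ) c * (covM μ X F)⁻¹ c b)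
              + (∑ c : F, (covM μ X F *ᵥ θ) c * θ c) * θ b / s2 by
          simp only [mul_add, Finset.sum_add_distrib]
          congr 1
          rw [Finset.sum_mul, Finset.sum_div]
          exact Finset.sum_congr rfl fun c _ => by ring, hvSi, hvθ]
        rw [← hs2, ← hθ]
        field_simp
        ring
    | some a =>
      cases y with
      | none =>
        simp only [Matrix.submatrix_apply, Bmat]
        have hone : (1 : Matrix (Option F) (Option F) ℝ) (some a) none = 0 := by
          simp [Matrix.one_apply]
        rw [hone]
        have h1 : ∀ c : F, (covM μ X (insert j F)) (e.symm (some a)) (e.symm (some c))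
            = covM μ X F a c := fun c => rfl
        have h0 : (covM μ X (insert j F)) (e.symm (some a)) (e.symm none)
            = (covM μ X F *ᵥ θ) a := hv a
        rw [h0]
        simp only [h1]
        rw [show (∑ c : F, covM μ X F a c * (-(θ c) / s2))
            = -((covM μ X F *ᵥ θ) a) / s2 by
          rw [show (covM μ X F *ᵥ θ) a = ∑ c : F, covM μ X F a c * θ c from rfl,
            eq_div_iff hs2ne, Finset.sum_mul, ← Finset.sum_neg_distrib]
          exact Finset.sum_congr rfl fun c _ => by field_simp]
        rw [← hs2]
        field_simp
        ring
      | some b =>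
        simp only [Matrix.submatrix_apply, Bmat]
        have h1 : ∀ c : F, (covM μ X (insert j F)) (e.symm (some a)) (e.symm (some c))
            = covM μ X F a c := fun c => rfl
        have h0 : (covM μ X (insert j F)) (e.symm (some a)) (e.symm none)
            = (covM μ X F *ᵥ θ) a := hv a
        rw [h0]
        simp only [h1]
        have hone : (1 : Matrix (Option F) (Option F) ℝ) (some a) (some b)
            = (1 : Matrix F F ℝ) a b := by
          by_cases hab : a = b
          · subst hab; simp
          · simp [Matrix.one_apply, hab]
        rw [hone]
        rw [show (∑ c : F, covM μ X F a c * ((covM μ X F)⁻¹ c b + θ c * θ b / s2))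
            = (∑ c : F, covM μ X F a c * (covM μ X F)⁻¹ c b)
              + (covM μ X F *ᵥ θ) a * θ b / s2 by
          simp only [mul_add, Finset.sum_add_distrib]
          congr 1
          rw [show (covM μ X F *ᵥ θ) a = ∑ c : F, covM μ X F a c * θ c from rfl,
            Finset.sum_mul, Finset.sum_div]
          exact Finset.sum_congr rfl fun c _ => by ring]
        have : (∑ c : F, covM μ X F a c * (covM μ X F)⁻¹ c b) = (1 : Matrix F F ℝ) a b := by
          rw [← Matrix.mul_apply, hmul]
        rw [this]
        ring
  have hC : covM μ X (insert j F)
      = ((covM μ X (insert j F)).submatrix e.symm e.symm).submatrix e e := by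
    rw [Matrix.submatrix_submatrix]
    simp [Equiv.symm_comp_self]
  have : covM μ X (insert j F) * (Bmat μ X F j).submatrix e e = 1 := by
    conv_lhs => rw [hC]
    rw [Matrix.submatrix_mul_equiv, hprod, Matrix.submatrix_one_equiv]
  exact Matrix.inv_eq_right_inv this


/-- Extend a vector on `F` by a value at `j`. -/
def lift {p : ℕ} {F : Finset (Fin p)} (U : F → ℝ) (q : ℝ) : Option F → ℝ :=
  fun x => x.elim q U

lemma lift_dot {F : Finset (Fin p)} (U W : F → ℝ) (q r : ℝ) :
    lift U q ⬝ᵥ lift W r = U ⬝ᵥ W + q * r := by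
  rw [dotProduct, Fintype.sum_option]
  simp only [lift, Option.elim]
  rw [add_comm]
  rfl

lemma Bmat_mulVec {F : Finset (Fin p)} {j : Fin p} (hsig : sigma2 μ X F j ≠ 0)
    (U' : F → ℝ) (q' : ℝ) :
    Bmat μ X F j *ᵥ lift U' q'
      = lift ((covM μ X F)⁻¹ *ᵥ U'
          + (((thetaJF μ X F j ⬝ᵥ U') - q') / sigma2 μ X F j) • thetaJF μ X F j)
          ((q' - thetaJF μ X F j ⬝ᵥ U') / sigma2 μ X F j) := by
  set θ := thetaJF μ X F j
  set s2 := sigma2 μ X F j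
  funext x
  cases x with
  | none =>
    show (∑ y : Option F, Bmat μ X F j none y * lift U' q' y) = _
    rw [Fintype.sum_option]
    simp only [Bmat, lift, Option.elim]
    rw [show (∑ b : F, -θ b / s2 * U' b) = -(θ ⬝ᵥ U') / s2 by
      rw [eq_div_iff hsig, Finset.sum_mul, dotProduct, ← Finset.sum_neg_distrib]
      exact Finset.sum_congr rfl fun b _ => by field_simp]
    rw [show sigma2 μ X F j = s2 from rfl]
    field_simp
    ring
  | some a =>
    show (∑ y : Option F, Bmat μ X F j (some a) y * lift U' q' y) = _
    rw [Fintype.sum_option]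
    simp only [Bmat, lift, Option.elim]
    rw [show (∑ b : F, ((covM μ X F)⁻¹ a b + θ a * θ b / s2) * U' b)
        = ((covM μ X F)⁻¹ *ᵥ U') a + θ a * (θ ⬝ᵥ U') / s2 by
      simp only [add_mul, Finset.sum_add_distrib]
      congr 1
      rw [dotProduct, Finset.mul_sum, Finset.sum_div]
      exact Finset.sum_congr rfl fun b _ => by ring]
    simp only [Pi.add_apply, Pi.smul_apply, smul_eq_mul]
    rw [show sigma2 μ X F j = s2 from rfl, show thetaJF μ X F j = θ from rfl]
    field_simp
    ring

lemma key_dot [IsProbabilityMeasure μ] {H : ℕ} (Y : Ω → ℝ) (J : Fin H → Set ℝ)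
    (hmom : ∀ i, MemLp (fun ω => X ω i) 4 μ) (hmean : ∀ i, ∫ ω, X ω i ∂μ = 0)
    (hpos : (covM μ X Finset.univ).PosDef) (hph : ∀ h, 0 < sliceP μ Y J h)
    (hLCM : SubsetLCM μ X) (F : Finset (Fin p)) {j : Fin p} (hj : j ∉ F)
    (hsig : 0 < sigma2 μ X F j) (h h' : Fin H) :
    sliceU μ X Y J (insert j F) h ⬝ᵥ (covM μ X (insert j F))⁻¹
        *ᵥ sliceU μ X Y J (insert j F) h'
      = sliceU μ X Y J F h ⬝ᵥ (covM μ X F)⁻¹ *ᵥ sliceU μ X Y J F h'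
        + gammaH μ X Y J F j h * gammaH μ X Y J F j h' := by
  set e := Finset.subtypeInsertEquivOption hj with he
  set θ := thetaJF μ X F j with hθ
  set ss := Real.sqrt (sigma2 μ X F j) with hss
  have hss2 : ss * ss = sigma2 μ X F j := Real.mul_self_sqrt hsig.le
  have hssne : sigma2 μ X F j ≠ 0 := hsig.ne'
  have hcomp : ∀ hh : Fin H, sliceU μ X Y J (insert j F) hh ∘ e.symm
      = lift (sliceU μ X Y J F hh)
          (θ ⬝ᵥ sliceU μ X Y J F hh + ss * gammaH μ X Y J F j hh) := by
    intro hh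
    funext x
    cases x with
    | none =>
      show sliceU μ X Y J (insert j F) hh (e.symm none) = _
      have : e.symm none = ⟨j, Finset.mem_insert_self j F⟩ := rfl
      rw [this, sliceU_insert_self μ X Y J hmom hph hLCM F hj hsig hh]
      rfl
    | some a => rfl
  rw [covM_insert_inv μ X hmom hmean hLCM hpos F hj hsig, Matrix.submatrix_mulVec_equiv,
    ← comp_equiv_symm_dotProduct (sliceU μ X Y J (insert j F) h)
      (Bmat μ X F j *ᵥ sliceU μ X Y J (insert j F) h' ∘ e.symm) e, hcomp, hcomp,
    Bmat_mulVec μ X hssne, lift_dot, dotProduct_add, dotProduct_smul]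
  rw [show sliceU μ X Y J F h ⬝ᵥ θ = θ ⬝ᵥ sliceU μ X Y J F h from dotProduct_comm _ _]
  set t := θ ⬝ᵥ sliceU μ X Y J F h
  set t' := θ ⬝ᵥ sliceU μ X Y J F h'
  set g := gammaH μ X Y J F j h
  set g' := gammaH μ X Y J F j h'
  set d := sliceU μ X Y J F h ⬝ᵥ (covM μ X F)⁻¹ *ᵥ sliceU μ X Y J F h'
  rw [smul_eq_mul]
  field_simp
  linear_combination g * g' * hss2


end TPAux


/-- Under the subset LCM assumption, for any `F ⊂ I` and `j ∈ Fᶜ`,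
`trace((M^{DR2}_{F∪{j}})²) = trace((M^{DR2}_F)²) + 2ι_{j|F}ᵀι_{j|F} + ϱ_{j|F}²`. -/
theorem dr2_trace_identity {Ω : Type*} [m0 : MeasurableSpace Ω]
    (μ : Measure Ω) [IsProbabilityMeasure μ]
    {p H : ℕ} (X : Ω → Fin p → ℝ) (Y : Ω → ℝ)
    (hX : Measurable X) (hY : Measurable Y)
    (hmom : ∀ i, MemLp (fun ω => X ω i) 4 μ)
    (hmean : ∀ i, ∫ ω, X ω i ∂μ = 0)
    (hpos : (covM μ X Finset.univ).PosDef)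
    (J : Fin H → Set ℝ) (hJ : IsSlicePartition J)
    (hph : ∀ h, 0 < sliceP μ Y J h)
    (invS : ∀ F : Finset (Fin p), Matrix F F ℝ)
    (hinvS : ∀ F, IsInvSqrt (invS F) (covM μ X F))
    (hLCM : SubsetLCM μ X)
    (F : Finset (Fin p)) (j : Fin p) (hj : j ∉ F)
    (hsig : 0 < sigma2 μ X F j) :
    ((MDR2 μ X Y J (insert j F) (invS (insert j F))) ^ 2).trace
      = ((MDR2 μ X Y J F (invS F)) ^ 2).trace
        + 2 * (iotaSum μ X Y J F (invS F) j ⬝ᵥ iotaSum μ X Y J F (invS F) j)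
        + rhoJF μ X Y J F j ^ 2 := by
  classical
  obtain ⟨hsymF, hsqF⟩ := hinvS F
  obtain ⟨hsymF', hsqF'⟩ := hinvS (insert j F)
  have hkey := TPAux.key_dot μ X Y J hmom hmean hpos hph hLCM F hj hsig
  simp only [MDR2, iotaSum, iotaH, rhoJF]
  rw [TPAux.aux_trace (fun h => sliceP μ Y J h)
    (fun h => sliceU μ X Y J (insert j F) h) hsymF' hsqF']
  rw [TPAux.aux_trace (fun h => sliceP μ Y J h)
    (fun h => sliceU μ X Y J F h) hsymF hsqF]
  rw [TPAux.aux_iota (fun h => sliceP μ Y J h) (fun h => gammaH μ X Y J F j h)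
    (fun h => sliceU μ X Y J F h) hsymF hsqF]
  rw [sq (∑ h, sliceP μ Y J h * gammaH μ X Y J F j h ^ 2), Finset.sum_mul_sum]
  simp only [hkey]
  simp only [Finset.mul_sum, ← Finset.sum_add_distrib]
  refine Finset.sum_congr rfl fun h _ => ?_
  refine Finset.sum_congr rfl fun h' _ => ?_
  ring
end
end

section
/- Assume the subset LCM assumption (E(x_j | X_F) = E(x_j X_Fᵀ)Σ_F^{-1}X_F a.s.). For m^{DR3}_F = Σ_{h=1}^H p_h U_{F,h}ᵀ Σ_F^{-1} U_{F,h} and M^{DR2}_F = Σ_{h=1}^H p_h Σ_F^{-1/2} U_{F,h} U_{F,h}ᵀ Σ_F^{-1/2}, and for any F ⊂ I and j ∈ F^c, trace(m^{DR3}_{F∪{j}} M^{DR2}_{F∪{j}}) = trace(m^{DR3}_F M^{DR2}_F) + 2 κ_F ϱ_{j|F} + ϱ_{j|F}². -/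
open MeasureTheory ProbabilityTheory Matrix Filter Finset
open scoped BigOperators ENNReal

noncomputable section

open TracePursuit

section Helpers


lemma sum_insert_subtype {p : ℕ} {j : Fin p} {F : Finset (Fin p)} (hj : j ∉ F)
    (f : {x // x ∈ insert j F} → ℝ) :
    ∑ i : {x // x ∈ insert j F}, f i
      = f ⟨j, Finset.mem_insert_self j F⟩
        + ∑ i : {x // x ∈ F}, f ⟨i.1, Finset.mem_insert_of_mem i.2⟩ := by
  rw [Finset.univ_eq_attach, Finset.attach_insert, Finset.sum_insert, Finset.sum_image]
  · rw [Finset.univ_eq_attach]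
  · intro x _ y _ hxy
    have : (x : Fin p) = y := by simpa using hxy
    exact Subtype.ext this
  · intro hmem
    rw [Finset.mem_image] at hmem
    obtain ⟨x, -, hx⟩ := hmem
    have : x.1 = j := congrArg Subtype.val hx
    exact hj (this ▸ x.2)

lemma posDef_submatrix {n m : Type*} [Fintype n] [Fintype m] [DecidableEq n]
    {M : Matrix n n ℝ} (hM : M.PosDef) (e : m → n) (he : Function.Injective e) :
    (M.submatrix e e).PosDef := by
  exact hM.submatrix he

lemma integrable_mul_of_L2 {Ω : Type*} [MeasurableSpace Ω] {μ : Measure Ω}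
    {f g : Ω → ℝ} (hf : MemLp f 2 μ) (hg : MemLp g 2 μ) :
    Integrable (fun ω => f ω * g ω) μ := by
  exact hf.integrable_mul hg


section CovHelpers

variable {Ω : Type*} [MeasurableSpace Ω] (μ : Measure Ω) {p : ℕ} (X : Ω → Fin p → ℝ)

lemma covM_submatrix (G : Finset (Fin p)) :
    covM μ X G = (covM μ X (Finset.univ : Finset (Fin p))).submatrix
      (fun i : G => (⟨i.1, Finset.mem_univ _⟩ : ((Finset.univ : Finset (Fin p)) : Type)))
      (fun i : G => ⟨i.1, Finset.mem_univ _⟩) := rfl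

lemma covM_posDef (hpos : (covM μ X (Finset.univ : Finset (Fin p))).PosDef)
    (G : Finset (Fin p)) : (covM μ X G).PosDef := by
  rw [covM_submatrix]
  refine posDef_submatrix hpos _ (fun a b hab => Subtype.ext ?_)
  simpa using hab

lemma covM_isSymm (G : Finset (Fin p)) : (covM μ X G).IsSymm := by
  ext i k
  simp only [Matrix.transpose_apply, covM, Matrix.of_apply]
  simp_rw [mul_comm]

lemma trace_mul_vecMulVec {n : Type*} [Fintype n] (A : Matrix n n ℝ) (u : n → ℝ) :
    (A * Matrix.vecMulVec u u).trace = u ⬝ᵥ A *ᵥ u := by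
  simp only [Matrix.trace, Matrix.diag, Matrix.mul_apply, Matrix.vecMulVec_apply,
    dotProduct, Matrix.mulVec, Finset.mul_sum]
  exact Finset.sum_congr rfl fun i _ => Finset.sum_congr rfl fun k _ => by ring

end CovHelpers

end Helpers

section SliceLemma

variable {Ω : Type*} [m0 : MeasurableSpace Ω]

set_option maxHeartbeats 2000000 in
lemma kappa_slice (μ : Measure Ω) [IsProbabilityMeasure μ]
    {p H : ℕ} (X : Ω → Fin p → ℝ) (Y : Ω → ℝ)
    (hmom : ∀ i, MemLp (fun ω => X ω i) 4 μ)
    (hmean : ∀ i, ∫ ω, X ω i ∂μ = 0)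
    (hpos : (covM μ X (Finset.univ : Finset (Fin p))).PosDef)
    (J : Fin H → Set ℝ) (hph : ∀ h, 0 < sliceP μ Y J h)
    (hLCM : SubsetLCM μ X)
    (F : Finset (Fin p)) (j : Fin p) (hj : j ∉ F)
    (hsig : 0 < sigma2 μ X F j) (h : Fin H) :
    sliceU μ X Y J (insert j F) h ⬝ᵥ (covM μ X (insert j F))⁻¹ *ᵥ sliceU μ X Y J (insert j F) h
      = sliceU μ X Y J F h ⬝ᵥ (covM μ X F)⁻¹ *ᵥ sliceU μ X Y J F h
        + gammaH μ X Y J F j h ^ 2 := by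
  classical
  -- abbreviations
  set G := insert j F with hGdef
  set Sf := covM μ X F with hSf
  set T := covM μ X G with hTdef
  set b : {x // x ∈ F} → ℝ := fun i => ∫ ω, X ω j * X ω i.1 ∂μ with hb
  set θ : {x // x ∈ F} → ℝ := thetaJF μ X F j with hθdef
  have hθeq : θ = Sf⁻¹ *ᵥ b := rfl
  set σ := Real.sqrt (sigma2 μ X F j) with hσdef
  have hσpos : 0 < σ := Real.sqrt_pos.2 hsig
  have hσsq : σ * σ = sigma2 μ X F j := Real.mul_self_sqrt hsig.le
  set u := sliceU μ X Y J F h with hu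
  set γh := gammaH μ X Y J F j h with hγhdef
  set P := sliceP μ Y J h with hP
  have hPne : P ≠ 0 := (hph h).ne'
  -- positive definiteness / invertibility
  have hFpd : Sf.PosDef := covM_posDef μ X hpos F
  have hGpd : T.PosDef := covM_posDef μ X hpos G
  have hFdet : IsUnit Sf.det := isUnit_iff_ne_zero.2 hFpd.det_pos.ne'
  have hGdet : IsUnit T.det := isUnit_iff_ne_zero.2 hGpd.det_pos.ne'
  have hθb : Sf *ᵥ θ = b := by
    rw [hθeq, Matrix.mulVec_mulVec, Matrix.mul_nonsing_inv _ hFdet, Matrix.one_mulVec]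
  -- symmetry
  have hsymm : Sf⁻¹.IsSymm := by
    have h1 : Sf.IsSymm := covM_isSymm μ X F
    unfold Matrix.IsSymm
    rw [Matrix.transpose_nonsing_inv, h1]
  -- integrability
  have hL2 : ∀ i, MemLp (fun ω => X ω i) 2 μ := fun i =>
    (hmom i).mono_exponent (by norm_num)
  have hInt1 : ∀ i, Integrable (fun ω => X ω i) μ := fun i =>
    (hmom i).integrable (by norm_num)
  have hIntXX : ∀ i k : Fin p, Integrable (fun ω => X ω i * X ω k) μ := fun i k =>
    integrable_mul_of_L2 (hL2 i) (hL2 k)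
  -- the residual
  have hres : xres μ X F j =ᵐ[μ] fun ω => X ω j - ∑ i : {x // x ∈ F}, θ i * X ω i.1 := by
    filter_upwards [hLCM F j hj] with ω hω
    unfold xres
    rw [hω]
  -- slice integral of residual
  have hIntOn : ∀ i : {x // x ∈ F},
      IntegrableOn (fun ω => θ i * X ω i.1) (Y ⁻¹' J h) μ := fun i =>
    ((hInt1 i.1).const_mul (θ i)).integrableOn
  have hIntSumOn : IntegrableOn
      (fun ω => ∑ i : {x // x ∈ F}, θ i * X ω i.1) (Y ⁻¹' J h) μ :=
    integrable_finset_sum _ fun i _ => hIntOn i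
  have hslice_res : ∫ ω in Y ⁻¹' J h, xres μ X F j ω ∂μ
      = (∫ ω in Y ⁻¹' J h, X ω j ∂μ)
        - ∑ i : {x // x ∈ F}, θ i * ∫ ω in Y ⁻¹' J h, X ω i.1 ∂μ := by
    rw [integral_congr_ae (ae_restrict_of_ae hres),
      integral_sub (hInt1 j).integrableOn hIntSumOn,
      integral_finset_sum _ fun i _ => hIntOn i]
    congr 1
    exact Finset.sum_congr rfl fun i _ => integral_const_mul _ _
  -- gammaH in terms of residual slice integral
  have hγ_slice : ∫ ω in Y ⁻¹' J h, xres μ X F j ω ∂μ = σ * (γh * P) := by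
    have h1 : γh = ((∫ ω in Y ⁻¹' J h, xres μ X F j ω ∂μ) / σ) / P := by
      rw [hγhdef]
      unfold gammaH gammaRes
      rw [integral_div]
    rw [h1]
    field_simp
  -- the j-entry of the slice mean on G
  have hUjG : sliceU μ X Y J G h ⟨j, Finset.mem_insert_self j F⟩ = θ ⬝ᵥ u + σ * γh := by
    have hXj : ∫ ω in Y ⁻¹' J h, X ω j ∂μ
        = σ * (γh * P) + ∑ i : {x // x ∈ F}, θ i * ∫ ω in Y ⁻¹' J h, X ω i.1 ∂μ := by
      rw [← hγ_slice, hslice_res]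
      ring
    show (∫ ω in Y ⁻¹' J h, X ω j ∂μ) / P = θ ⬝ᵥ u + σ * γh
    rw [hXj, add_div, Finset.sum_div]
    have h2 : σ * (γh * P) / P = σ * γh := by
      field_simp
    rw [h2]
    unfold dotProduct
    rw [add_comm]
    congr 1
    refine Finset.sum_congr rfl fun i _ => ?_
    rw [hu]
    unfold sliceU
    rw [mul_div_assoc]
  -- the variance identity
  have hvar : sigma2 μ X F j = (∫ ω, X ω j * X ω j ∂μ) - θ ⬝ᵥ b := by
    have hmres : ∫ ω, xres μ X F j ω ∂μ = 0 := by
      rw [integral_congr_ae hres,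
        integral_sub (hInt1 j) (integrable_finset_sum _ fun i _ => (hInt1 i.1).const_mul (θ i)),
        integral_finset_sum _ fun i _ => (hInt1 i.1).const_mul (θ i), hmean j]
      simp [integral_const_mul, hmean]
    have hres2 : (fun ω => xres μ X F j ω ^ 2) =ᵐ[μ]
        fun ω => X ω j * X ω j
          - 2 * ∑ i : {x // x ∈ F}, θ i * (X ω j * X ω i.1)
          + ∑ i : {x // x ∈ F}, ∑ k : {x // x ∈ F}, (θ i * θ k) * (X ω i.1 * X ω k.1) := by
      filter_upwards [hres] with ω hω
      rw [hω]
      have e1 : ∑ i : {x // x ∈ F}, θ i * (X ω j * X ω i.1)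
          = X ω j * ∑ i : {x // x ∈ F}, θ i * X ω i.1 := by
        rw [Finset.mul_sum]
        exact Finset.sum_congr rfl fun i _ => by ring
      have e2 : ∑ i : {x // x ∈ F}, ∑ k : {x // x ∈ F}, (θ i * θ k) * (X ω i.1 * X ω k.1)
          = (∑ i : {x // x ∈ F}, θ i * X ω i.1) * ∑ k : {x // x ∈ F}, θ k * X ω k.1 := by
        rw [Finset.sum_mul_sum]
        exact Finset.sum_congr rfl fun i _ => Finset.sum_congr rfl fun k _ => by ring
      rw [e1, e2]
      ring
    have intB : Integrable
        (fun ω => 2 * ∑ i : {x // x ∈ F}, θ i * (X ω j * X ω i.1)) μ :=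
      (integrable_finset_sum _ fun i _ => (hIntXX j i.1).const_mul (θ i)).const_mul 2
    have intAB : Integrable
        (fun ω => X ω j * X ω j - 2 * ∑ i : {x // x ∈ F}, θ i * (X ω j * X ω i.1)) μ :=
      (hIntXX j j).sub intB
    have intC : Integrable
        (fun ω => ∑ i : {x // x ∈ F}, ∑ k : {x // x ∈ F},
          (θ i * θ k) * (X ω i.1 * X ω k.1)) μ :=
      integrable_finset_sum _ fun i _ => integrable_finset_sum _ fun k _ =>
        (hIntXX i.1 k.1).const_mul (θ i * θ k)
    have hsq : ∫ ω, xres μ X F j ω ^ 2 ∂μ = (∫ ω, X ω j * X ω j ∂μ) - θ ⬝ᵥ b := by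
      rw [integral_congr_ae hres2,
        integral_add intAB intC,
        integral_sub (hIntXX j j) intB,
        integral_const_mul,
        integral_finset_sum _ (fun i _ => (hIntXX j i.1).const_mul (θ i)),
        integral_finset_sum _ (fun i _ => integrable_finset_sum _ fun k _ =>
            (hIntXX i.1 k.1).const_mul (θ i * θ k))]
      have e3 : ∑ i : {x // x ∈ F}, ∫ ω, θ i * (X ω j * X ω i.1) ∂μ = θ ⬝ᵥ b := by
        refine Finset.sum_congr rfl fun i _ => ?_
        rw [integral_const_mul]
      have e4 : ∑ i : {x // x ∈ F},
          ∫ ω, ∑ k : {x // x ∈ F}, (θ i * θ k) * (X ω i.1 * X ω k.1) ∂μ = θ ⬝ᵥ b := by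
        have : ∀ i : {x // x ∈ F},
            ∫ ω, ∑ k : {x // x ∈ F}, (θ i * θ k) * (X ω i.1 * X ω k.1) ∂μ
              = θ i * ∑ k : {x // x ∈ F}, Sf i k * θ k := by
          intro i
          rw [integral_finset_sum _ (fun k _ => (hIntXX i.1 k.1).const_mul (θ i * θ k)),
            Finset.mul_sum]
          refine Finset.sum_congr rfl fun k _ => ?_
          rw [integral_const_mul]
          show θ i * θ k * (covM μ X F i k) = _
          ring
        calc ∑ i : {x // x ∈ F}, ∫ ω, ∑ k : {x // x ∈ F},
                (θ i * θ k) * (X ω i.1 * X ω k.1) ∂μ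
            = ∑ i : {x // x ∈ F}, θ i * ∑ k : {x // x ∈ F}, Sf i k * θ k :=
              Finset.sum_congr rfl fun i _ => this i
          _ = θ ⬝ᵥ (Sf *ᵥ θ) := rfl
          _ = θ ⬝ᵥ b := by rw [hθb]
      rw [e3, e4]
      ring
    unfold sigma2 varF
    rw [hsq, hmres]
    ring
  -- the solution vector
  set c := γh / σ with hc
  set v := Sf⁻¹ *ᵥ u with hv
  set w : {x // x ∈ G} → ℝ :=
    fun i => if hi : i.1 ∈ F then v ⟨i.1, hi⟩ - c * θ ⟨i.1, hi⟩ else c with hw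
  have hSv : Sf *ᵥ v = u := by
    rw [hv, Matrix.mulVec_mulVec, Matrix.mul_nonsing_inv _ hFdet, Matrix.one_mulVec]
  have hvec : Sf *ᵥ (v - c • θ) = u - c • b := by
    rw [Matrix.mulVec_sub, Matrix.mulVec_smul, hSv, hθb]
  have hwF : ∀ k : {x // x ∈ F},
      w ⟨k.1, Finset.mem_insert_of_mem k.2⟩ = v k - c * θ k := by
    intro k
    rw [hw]
    simp only [dif_pos k.2]
  have hwj : w ⟨j, Finset.mem_insert_self j F⟩ = c := by
    rw [hw]
    simp only [dif_neg hj]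
  have hbv : b ⬝ᵥ v = θ ⬝ᵥ u := by
    rw [hv, Matrix.dotProduct_mulVec]
    have hvm : Matrix.vecMul b Sf⁻¹ = θ := by
      conv_lhs => rw [← hsymm]
      rw [Matrix.vecMul_transpose]
      exact hθeq.symm
    rw [hvm]
  have huG : ∀ k : {x // x ∈ F},
      sliceU μ X Y J G h ⟨k.1, Finset.mem_insert_of_mem k.2⟩ = u k := fun k => rfl
  have hTw : T *ᵥ w = sliceU μ X Y J G h := by
    funext i
    have hrow : (T *ᵥ w) i
        = T i ⟨j, Finset.mem_insert_self j F⟩ * c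
          + ∑ k : {x // x ∈ F},
            T i ⟨k.1, Finset.mem_insert_of_mem k.2⟩ * (v k - c * θ k) := by
      show ∑ k : {x // x ∈ G}, T i k * w k = _
      rw [sum_insert_subtype hj (fun k => T i k * w k), hwj]
      congr 1
      exact Finset.sum_congr rfl fun k _ => by rw [hwF k]
    rcases Finset.mem_insert.1 i.2 with hij | hiF
    · have hieq : i = ⟨j, Finset.mem_insert_self j F⟩ := Subtype.ext hij
      rw [hieq] at hrow ⊢
      have hTjj : T ⟨j, Finset.mem_insert_self j F⟩ ⟨j, Finset.mem_insert_self j F⟩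
          = θ ⬝ᵥ b + σ * σ := by
        show ∫ ω, X ω j * X ω j ∂μ = _
        rw [hσsq, hvar]
        ring
      have hsum : ∑ k : {x // x ∈ F},
          T ⟨j, Finset.mem_insert_self j F⟩ ⟨k.1, Finset.mem_insert_of_mem k.2⟩
            * (v k - c * θ k) = b ⬝ᵥ (v - c • θ) := rfl
      rw [hrow, hTjj, hsum, dotProduct_sub, dotProduct_smul, hbv, hUjG,
        dotProduct_comm b θ]
      have hσc : σ * σ * c = σ * γh := by
        rw [hc]
        field_simp
      rw [smul_eq_mul]
      nlinarith [hσc]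
    · have hTij : T i ⟨j, Finset.mem_insert_self j F⟩ = b ⟨i.1, hiF⟩ := by
        show ∫ ω, X ω i.1 * X ω j ∂μ = ∫ ω, X ω j * X ω i.1 ∂μ
        simp_rw [mul_comm]
      have hsum : ∑ k : {x // x ∈ F},
          T i ⟨k.1, Finset.mem_insert_of_mem k.2⟩ * (v k - c * θ k)
            = (Sf *ᵥ (v - c • θ)) ⟨i.1, hiF⟩ := rfl
      have hgoal : sliceU μ X Y J G h i = u ⟨i.1, hiF⟩ := rfl
      rw [hrow, hTij, hsum, hvec, hgoal]
      show b ⟨i.1, hiF⟩ * c + (u ⟨i.1, hiF⟩ - c * b ⟨i.1, hiF⟩) = u ⟨i.1, hiF⟩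
      ring
  have hwinv : T⁻¹ *ᵥ sliceU μ X Y J G h = w := by
    rw [← hTw, Matrix.mulVec_mulVec, Matrix.nonsing_inv_mul _ hGdet, Matrix.one_mulVec]
  rw [hwinv]
  have hdot : sliceU μ X Y J G h ⬝ᵥ w
      = (θ ⬝ᵥ u + σ * γh) * c + (u ⬝ᵥ v - c * (u ⬝ᵥ θ)) := by
    show ∑ k : {x // x ∈ G}, sliceU μ X Y J G h k * w k = _
    rw [sum_insert_subtype hj (fun k => sliceU μ X Y J G h k * w k), hwj, hUjG]
    congr 1
    have hsum : ∑ k : {x // x ∈ F},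
        sliceU μ X Y J G h ⟨k.1, Finset.mem_insert_of_mem k.2⟩ * w ⟨k.1, Finset.mem_insert_of_mem k.2⟩
          = u ⬝ᵥ (v - c • θ) := by
      refine Finset.sum_congr rfl fun k _ => ?_
      rw [huG k, hwF k]
      rfl
    rw [hsum, dotProduct_sub, dotProduct_smul, smul_eq_mul]
  rw [hdot, dotProduct_comm u θ, hc]
  field_simp
  ring

end SliceLemma

lemma trace_MDR2 {Ω : Type*} [MeasurableSpace Ω] (μ : Measure Ω) {p H : ℕ}
    (X : Ω → Fin p → ℝ) (Y : Ω → ℝ) (J : Fin H → Set ℝ) (F : Finset (Fin p))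
    (S : Matrix F F ℝ) (hS : IsInvSqrt S (covM μ X F)) :
    (MDR2 μ X Y J F S).trace = kappaF μ X Y J F := by
  unfold MDR2 kappaF
  rw [Matrix.trace_sum]
  refine Finset.sum_congr rfl fun h _ => ?_
  rw [Matrix.trace_smul, smul_eq_mul]
  congr 1
  have h1 : (S * Matrix.vecMulVec (sliceU μ X Y J F h) (sliceU μ X Y J F h) * S).trace
      = ((S * S) * Matrix.vecMulVec (sliceU μ X Y J F h) (sliceU μ X Y J F h)).trace := by
    rw [Matrix.trace_mul_comm, ← Matrix.mul_assoc]
  rw [h1, hS.2, trace_mul_vecMulVec]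


/-- Under the subset LCM assumption, with `m^{DR3}_F = Σ_h p_h U_{F,h}ᵀ Σ_F⁻¹ U_{F,h}` (the
scalar `κ_F`), for any `F ⊂ I` and `j ∈ Fᶜ`,
`trace(m^{DR3}_{F∪{j}} M^{DR2}_{F∪{j}}) = trace(m^{DR3}_F M^{DR2}_F) + 2κ_F ϱ_{j|F} + ϱ_{j|F}²`. -/
theorem dr3_trace_identity {Ω : Type*} [m0 : MeasurableSpace Ω]
    (μ : Measure Ω) [IsProbabilityMeasure μ]
    {p H : ℕ} (X : Ω → Fin p → ℝ) (Y : Ω → ℝ)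
    (hX : Measurable X) (hY : Measurable Y)
    (hmom : ∀ i, MemLp (fun ω => X ω i) 4 μ)
    (hmean : ∀ i, ∫ ω, X ω i ∂μ = 0)
    (hpos : (covM μ X Finset.univ).PosDef)
    (J : Fin H → Set ℝ) (hJ : IsSlicePartition J)
    (hph : ∀ h, 0 < sliceP μ Y J h)
    (invS : ∀ F : Finset (Fin p), Matrix F F ℝ)
    (hinvS : ∀ F, IsInvSqrt (invS F) (covM μ X F))
    (hLCM : SubsetLCM μ X)
    (F : Finset (Fin p)) (j : Fin p) (hj : j ∉ F)
    (hsig : 0 < sigma2 μ X F j) :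
    (kappaF μ X Y J (insert j F) • MDR2 μ X Y J (insert j F) (invS (insert j F))).trace
      = (kappaF μ X Y J F • MDR2 μ X Y J F (invS F)).trace
        + 2 * kappaF μ X Y J F * rhoJF μ X Y J F j
        + rhoJF μ X Y J F j ^ 2 := by
  have hκ : kappaF μ X Y J (insert j F) = kappaF μ X Y J F + rhoJF μ X Y J F j := by
    unfold kappaF rhoJF
    rw [← Finset.sum_add_distrib]
    refine Finset.sum_congr rfl fun h _ => ?_
    rw [kappa_slice μ X Y hmom hmean hpos J hph hLCM F j hj hsig h, mul_add]
  rw [Matrix.trace_smul, Matrix.trace_smul, smul_eq_mul, smul_eq_mul,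
    trace_MDR2 μ X Y J (insert j F) _ (hinvS (insert j F)),
    trace_MDR2 μ X Y J F _ (hinvS F), hκ]
  ring
end
end
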